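/- arXiv:2102.00857 — 7 statements merged into one kernel-verified Lean document; each statement's English description precedes it below -/
import Mathlib

section
/- Let X be a Banach space and (f_n) a weak* null sequence in X*. Then β((f_n)) ≤ α((f_n)) ≤ 2β((f_n)), where α((f_n)) = sup over weakly compact K ⊆ B_X of limsup_n sup_{x∈K} |⟨f_n, x⟩| and β((f_n)) = sup over weakly null sequences (x_n) in B_X of limsup_n |⟨f_n, x_n⟩|. -/
open Filter Topology Metric Set NormedSpace

noncomputable section

/-- `y` is a convex block subsequence of `x`. -/
def IsConvexBlock {E : Type*} [AddCommGroup E] [Module ℝ E] (x y : ℕ → E) : Prop :=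
  ∃ k : ℕ → ℕ, k 0 = 0 ∧ StrictMono k ∧
    ∀ n, y n ∈ convexHull ℝ (x '' Set.Ico (k n) (k (n + 1)))

variable (X : Type*) [NormedAddCommGroup X] [NormedSpace ℝ X]

/-- A set is weakly compact if its image in the weak topology is compact. -/
def WeaklyCompact (K : Set X) : Prop := IsCompact (toWeakSpace ℝ X '' K)

/-- A sequence is weakly null. -/
def WeaklyNull (x : ℕ → X) : Prop :=
  ∀ f : X →L[ℝ] ℝ, Tendsto (fun n => f (x n)) atTop (𝓝 0)

/-- A sequence in the dual is weak* null. -/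
def WeakStarNull (f : ℕ → X →L[ℝ] ℝ) : Prop :=
  ∀ x : X, Tendsto (fun n => f n x) atTop (𝓝 0)

/-- A sequence in the dual is weak* Cauchy. -/
def WeakStarCauchy (f : ℕ → X →L[ℝ] ℝ) : Prop :=
  ∀ x : X, ∃ L : ℝ, Tendsto (fun n => f n x) atTop (𝓝 L)

variable {X}

/-- α((f_n)) = sup over weakly compact K ⊆ B_X of limsup_n sup_{x ∈ K} |⟨f_n, x⟩|. -/
def alphaQ (f : ℕ → X →L[ℝ] ℝ) : ℝ :=
  sSup { r | ∃ K : Set X, K ⊆ closedBall 0 1 ∧ WeaklyCompact X K ∧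
    r = limsup (fun n => sSup ((fun x => |f n x|) '' K)) atTop }

/-- β((f_n)) = sup over weakly null (x_n) in B_X of limsup_n |⟨f_n, x_n⟩|. -/
def betaQ (f : ℕ → X →L[ℝ] ℝ) : ℝ :=
  sSup { r | ∃ x : ℕ → X, (∀ n, x n ∈ closedBall (0 : X) 1) ∧ WeaklyNull X x ∧
    r = limsup (fun n => |f n (x n)|) atTop }

/-- ca_{ρ*}((f_n)): measures Mackey-Cauchyness. -/
def caRho (f : ℕ → X →L[ℝ] ℝ) : ℝ :=
  sSup { r | ∃ K : Set X, K ⊆ closedBall 0 1 ∧ WeaklyCompact X K ∧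
    r = ⨅ n : ℕ, sSup { t | ∃ k ≥ n, ∃ l ≥ n, ∃ x ∈ K, t = |(f k - f l) x| } }

/-- ca((z_n)) = inf_n sup_{k,l ≥ n} ‖z_k - z_l‖. -/
def caSeq {E : Type*} [NormedAddCommGroup E] (z : ℕ → E) : ℝ :=
  ⨅ n : ℕ, sSup { r | ∃ k ≥ n, ∃ l ≥ n, r = ‖z k - z l‖ }

variable (X)

def K1 : ℝ :=
  sSup { r | ∃ f : ℕ → X →L[ℝ] ℝ, (∀ n, ‖f n‖ ≤ 1) ∧ WeakStarNull X f ∧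
    r = sInf { s | ∃ g, IsConvexBlock f g ∧ s = alphaQ g } }

def K2 : ℝ :=
  sSup { r | ∃ f : ℕ → X →L[ℝ] ℝ, (∀ n, ‖f n‖ ≤ 1) ∧ WeakStarNull X f ∧
    r = sInf { s | ∃ g, IsConvexBlock f g ∧ s = betaQ g } }

def K3 : ℝ :=
  sSup { r | ∃ f : ℕ → X →L[ℝ] ℝ, (∀ n, ‖f n‖ ≤ 1) ∧ WeakStarCauchy X f ∧
    r = sInf { s | ∃ g, IsConvexBlock f g ∧ s = caRho g } }

/-- Property (K). -/
def PropertyK : Prop :=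
  ∀ f : ℕ → X →L[ℝ] ℝ, WeakStarNull X f → ∃ g, IsConvexBlock f g ∧ alphaQ g = 0

/-- The Grothendieck property: every weak* null sequence in the dual is weakly null. -/
def Grothendieck : Prop :=
  ∀ f : ℕ → X →L[ℝ] ℝ, WeakStarNull X f →
    ∀ Φ : (X →L[ℝ] ℝ) →L[ℝ] ℝ, Tendsto (fun n => Φ (f n)) atTop (𝓝 0)

def GQ : ℝ :=
  sSup { r | ∃ f : ℕ → X →L[ℝ] ℝ, (∀ n, ‖f n‖ ≤ 1) ∧ WeakStarNull X f ∧
    r = sInf { s | ∃ g, IsConvexBlock f g ∧ s = limsup (fun n => ‖g n‖) atTop } }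

def RQ : ℝ :=
  sSup { r | ∃ x : ℕ → X, (∀ n, x n ∈ closedBall (0 : X) 1) ∧
    r = sInf { s | ∃ z, IsConvexBlock x z ∧ s = caSeq z } }

/-- weak* cluster points in the bidual of a sequence in the bidual. -/
def WStarClusterPts (u : ℕ → (X →L[ℝ] ℝ) →L[ℝ] ℝ) : Set ((X →L[ℝ] ℝ) →L[ℝ] ℝ) :=
  { z | MapClusterPt (StrongDual.toWeakDual (𝕜 := ℝ) z) atTop
      (fun n => StrongDual.toWeakDual (𝕜 := ℝ) (u n)) }

def wckQ (A : Set X) : ℝ :=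
  sSup { r | ∃ x : ℕ → X, (∀ n, x n ∈ A) ∧
    r = sInf { s | ∃ z ∈ WStarClusterPts X (fun n => inclusionInDoubleDual ℝ X (x n)),
      ∃ v : X, s = ‖z - inclusionInDoubleDual ℝ X v‖ } }

section AuxES

variable {E : Type*} [NormedAddCommGroup E] [NormedSpace ℝ E]

lemma myWeakEvalContinuous (g : E →L[ℝ] ℝ) :
    Continuous fun w : WeakSpace ℝ E => g ((toWeakSpace ℝ E).symm w) :=
  WeakBilin.eval_continuous ((topDualPairing ℝ E).flip) g

lemma myFlipInj : Function.Injective ((topDualPairing ℝ E).flip) := by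
  intro u v h
  refine (NormedSpace.eq_iff_forall_dual_eq ℝ).mpr fun g => ?_
  have := LinearMap.congr_fun h g
  simpa using this

lemma myIsClosedWeakSubmodule (Y : Submodule ℝ E) (hY : IsClosed (Y : Set E)) :
    IsClosed (toWeakSpace ℝ E '' (Y : Set E)) := by
  have h := (Y.convex).toWeakSpace_closure (𝕜 := ℝ)
  rw [hY.closure_eq] at h
  rw [h]
  exact isClosed_closure

lemma myExistsSeparating (Y : Submodule ℝ E) (hsep : TopologicalSpace.IsSeparable (Y : Set E)) :
    ∃ g : ℕ → E →L[ℝ] ℝ, ∀ u ∈ Y, u ≠ 0 → ∃ j, g j u ≠ 0 := by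
  classical
  obtain ⟨c, hc, hYc⟩ := hsep
  obtain ⟨d, hd⟩ := (hc.insert 0).exists_eq_range (Set.insert_nonempty 0 c)
  refine ⟨fun i => if h : d i = 0 then 0 else Classical.choose (exists_dual_vector ℝ (d i) (norm_ne_zero_iff.mpr h)),
    fun u hu hune => ?_⟩
  have hupos : 0 < ‖u‖ := norm_pos_iff.mpr hune
  have hucl : u ∈ closure (Set.range d) := by
    rw [← hd]
    exact closure_mono (Set.subset_insert 0 c) (hYc hu)
  obtain ⟨w, hwmem, hdist⟩ := Metric.mem_closure_iff.mp hucl (‖u‖ / 3) (by positivity)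
  obtain ⟨i, rfl⟩ := hwmem
  have hdiu : ‖d i - u‖ < ‖u‖ / 3 := by
    rw [dist_eq_norm] at hdist
    rwa [norm_sub_rev]
  have hdin : 2 * ‖u‖ / 3 < ‖d i‖ := by
    have h2 := norm_sub_norm_le u (d i)
    have : ‖u - d i‖ < ‖u‖ / 3 := by rwa [norm_sub_rev] at hdiu
    linarith
  have hne : d i ≠ 0 := by
    intro h0
    rw [h0, norm_zero] at hdin
    linarith
  refine ⟨i, ?_⟩
  simp only [dif_neg hne]
  obtain ⟨hnorm, happ⟩ := Classical.choose_spec (exists_dual_vector ℝ (d i) (norm_ne_zero_iff.mpr hne))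
  set G := Classical.choose (exists_dual_vector ℝ (d i) (norm_ne_zero_iff.mpr hne)) with hG
  intro h0
  have hGd : G (d i) = ‖d i‖ := by simpa using happ
  have hbound : |G (d i - u)| ≤ ‖d i - u‖ := by
    calc |G (d i - u)| = ‖G (d i - u)‖ := (Real.norm_eq_abs _).symm
      _ ≤ ‖G‖ * ‖d i - u‖ := G.le_opNorm _
      _ = ‖d i - u‖ := by rw [hnorm, one_mul]
  have heq : G (d i) = G (d i - u) := by rw [map_sub, h0, sub_zero]
  have hle : ‖d i‖ ≤ ‖d i - u‖ := by
    rw [← hGd, heq]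
    exact (le_abs_self _).trans hbound
  linarith

lemma myWeakSeqSubseq {K : Set E} (hK1 : K ⊆ closedBall 0 1) (hK : WeaklyCompact E K)
    {x : ℕ → E} (hx : ∀ n, x n ∈ K) :
    ∃ v : E, ‖v‖ ≤ 1 ∧ ∃ σ : ℕ → ℕ, StrictMono σ ∧
      ∀ g : E →L[ℝ] ℝ, Tendsto (fun j => g (x (σ j))) atTop (𝓝 (g v)) := by
  classical
  set Y := (Submodule.span ℝ (Set.range x)).topologicalClosure with hYdef
  have hxY : ∀ n, x n ∈ Y :=
    fun n => Submodule.le_topologicalClosure _ (Submodule.subset_span (Set.mem_range_self n))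
  have hsep : TopologicalSpace.IsSeparable (Y : Set E) := by
    rw [hYdef, Submodule.topologicalClosure_coe]
    exact ((Set.countable_range x).isSeparable.span).closure
  obtain ⟨g, hg⟩ := myExistsSeparating Y hsep
  set C : Set (WeakSpace ℝ E) := toWeakSpace ℝ E '' (K ∩ (Y : Set E)) with hCdef
  have hCcpt : IsCompact C := by
    have himg : C = (toWeakSpace ℝ E '' K) ∩ (toWeakSpace ℝ E '' (Y : Set E)) := by
      rw [hCdef, Set.image_inter (toWeakSpace ℝ E).injective]
    rw [himg]
    exact hK.inter_right
      (myIsClosedWeakSubmodule Y (Submodule.isClosed_topologicalClosure _))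
  haveI : CompactSpace C := isCompact_iff_compactSpace.mp hCcpt
  let Φ : C → (ℕ → ℝ) := fun w j => g j ((toWeakSpace ℝ E).symm w.1)
  have hΦc : Continuous Φ :=
    continuous_pi fun j => (myWeakEvalContinuous (g j)).comp continuous_subtype_val
  have hΦi : Function.Injective Φ := by
    rintro ⟨w1, hw1⟩ ⟨w2, hw2⟩ h
    obtain ⟨u1, hu1, rfl⟩ := hw1
    obtain ⟨u2, hu2, rfl⟩ := hw2
    have hval : ∀ j, g j u1 = g j u2 := by
      intro j
      have := congrFun h j
      simpa [Φ, (toWeakSpace ℝ E).symm_apply_apply] using this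
    have he : u1 = u2 := by
      by_contra hne
      obtain ⟨j, hj⟩ := hg (u1 - u2) (Submodule.sub_mem Y hu1.2 hu2.2) (sub_ne_zero.mpr hne)
      exact hj (by simp [map_sub, hval j])
    subst he; rfl
  haveI : TopologicalSpace.MetrizableSpace C :=
    (hΦc.isClosedEmbedding hΦi).toIsEmbedding.metrizableSpace
  let s : ℕ → C := fun n => ⟨toWeakSpace ℝ E (x n), ⟨x n, ⟨hx n, hxY n⟩, rfl⟩⟩
  obtain ⟨a, -, σ, hσ, hconv⟩ := isCompact_univ.tendsto_subseq (x := s) (fun n => Set.mem_univ _)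
  obtain ⟨v, hvKY, hva⟩ := a.2
  refine ⟨v, ?_, σ, hσ, ?_⟩
  · have := hK1 hvKY.1
    rwa [mem_closedBall_zero_iff] at this
  · intro g0
    have h1 : Tendsto (fun j => (s (σ j)).1) atTop (𝓝 a.1) :=
      (continuous_subtype_val.tendsto a).comp hconv
    have h2 := ((myWeakEvalContinuous g0).tendsto a.1).comp h1
    rw [← hva] at h2
    simpa [s, Function.comp_def, (toWeakSpace ℝ E).symm_apply_apply] using h2

end AuxES

theorem stmt0 {X : Type*} [NormedAddCommGroup X] [NormedSpace ℝ X] [CompleteSpace X]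
    (f : ℕ → X →L[ℝ] ℝ) (hf : WeakStarNull X f) :
    betaQ f ≤ alphaQ f ∧ alphaQ f ≤ 2 * betaQ f := by
  classical
  obtain ⟨C, hC⟩ : ∃ C, ∀ n, ‖f n‖ ≤ C := by
    apply banach_steinhaus
    intro x
    obtain ⟨b, hb⟩ := ((hf x).norm).bddAbove_range
    exact ⟨b, fun i => hb (Set.mem_range_self i)⟩
  have hC0 : 0 ≤ C := le_trans (norm_nonneg (f 0)) (hC 0)
  have hfb : ∀ n, ∀ z ∈ closedBall (0 : X) 1, |f n z| ≤ C := by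
    intro n z hz
    rw [mem_closedBall_zero_iff] at hz
    calc |f n z| = ‖f n z‖ := (Real.norm_eq_abs _).symm
      _ ≤ ‖f n‖ * ‖z‖ := (f n).le_opNorm z
      _ ≤ C * 1 := mul_le_mul (hC n) hz (norm_nonneg z) hC0
      _ = C := mul_one C
  set Sβ := { r | ∃ x : ℕ → X, (∀ n, x n ∈ closedBall (0 : X) 1) ∧ WeaklyNull X x ∧
    r = limsup (fun n => |f n (x n)|) atTop } with hSβ
  set Sα := { r | ∃ K : Set X, K ⊆ closedBall 0 1 ∧ WeaklyCompact X K ∧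
    r = limsup (fun n => sSup ((fun x => |f n x|) '' K)) atTop } with hSα
  have hβeq : betaQ f = sSup Sβ := rfl
  have hαeq : alphaQ f = sSup Sα := rfl
  have hSβ_bdd : BddAbove Sβ := by
    refine ⟨C, ?_⟩
    rintro r ⟨x, hx, -, rfl⟩
    apply limsup_le_of_le (isCoboundedUnder_le_of_le atTop (fun n => abs_nonneg _))
    exact Eventually.of_forall fun n => hfb n (x n) (hx n)
  have h0β : (0 : ℝ) ∈ Sβ := by
    refine ⟨fun _ => 0, fun n => mem_closedBall_self zero_le_one,
      fun g => by simp only [map_zero]; exact (tendsto_const_nhds : Tendsto (fun _ : ℕ => (0:ℝ)) atTop _), ?_⟩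
    simp only [map_zero, abs_zero]
    exact (limsup_const (0 : ℝ)).symm
  have hβ0 : 0 ≤ betaQ f := hβeq ▸ le_csSup hSβ_bdd h0β
  have hSα_bdd : BddAbove Sα := by
    refine ⟨C, ?_⟩
    rintro r ⟨K, hK1, -, rfl⟩
    apply limsup_le_of_le
    · refine isCoboundedUnder_le_of_le (x := 0) atTop fun n => ?_
      refine Real.sSup_nonneg ?_
      rintro y ⟨z, -, rfl⟩
      exact abs_nonneg _
    · refine Eventually.of_forall fun n => Real.sSup_le ?_ hC0
      rintro y ⟨z, hz, rfl⟩
      exact hfb n z (hK1 hz)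
  have h0α : (0 : ℝ) ∈ Sα := by
    refine ⟨∅, Set.empty_subset _, ?_, ?_⟩
    · unfold WeaklyCompact
      rw [Set.image_empty]
      exact isCompact_empty
    · simp only [Set.image_empty, Real.sSup_empty]
      exact (limsup_const (0 : ℝ)).symm
  have hα0 : 0 ≤ alphaQ f := hαeq ▸ le_csSup hSα_bdd h0α
  constructor
  · -- beta ≤ alpha
    rw [hβeq]
    refine Real.sSup_le ?_ hα0
    rintro r ⟨x, hxB, hxw, rfl⟩
    set K : Set X := insert 0 (Set.range x) with hK
    have hK1 : K ⊆ closedBall 0 1 := by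
      rintro z hz
      rcases Set.mem_insert_iff.mp hz with rfl | ⟨n, rfl⟩
      · exact mem_closedBall_self zero_le_one
      · exact hxB n
    have hKw : WeaklyCompact X K := by
      have ht : Tendsto (fun n => toWeakSpace ℝ X (x n)) atTop (𝓝 (0 : WeakSpace ℝ X)) := by
        refine (WeakBilin.tendsto_iff_forall_eval_tendsto ((topDualPairing ℝ X).flip) myFlipInj).mpr ?_
        intro g
        have h0 : ((topDualPairing ℝ X).flip 0) g = 0 := by rw [map_zero]; rfl
        convert hxw g using 2
        · rfl
        · exact h0
      have h2 := ht.isCompact_insert_range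
      unfold WeaklyCompact
      have himg : toWeakSpace ℝ X '' K
          = insert (0 : WeakSpace ℝ X) (Set.range fun n => toWeakSpace ℝ X (x n)) := by
        rw [hK, Set.image_insert_eq, map_zero]
        congr 1
        rw [← Set.range_comp]
        rfl
      rw [himg]
      exact h2
    have hbddim : ∀ n, BddAbove ((fun z => |f n z|) '' K) := by
      intro n
      refine ⟨C, ?_⟩
      rintro y ⟨z, hz, rfl⟩
      exact hfb n z (hK1 hz)
    have hle : limsup (fun n => |f n (x n)|) atTop
        ≤ limsup (fun n => sSup ((fun z => |f n z|) '' K)) atTop := by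
      apply limsup_le_limsup
      · refine Eventually.of_forall fun n => ?_
        exact le_csSup (hbddim n)
          (Set.mem_image_of_mem _ (Set.mem_insert_of_mem _ (Set.mem_range_self n)))
      · exact isCoboundedUnder_le_of_le atTop fun n => abs_nonneg _
      · refine isBoundedUnder_of ⟨C, fun n => ?_⟩
        refine Real.sSup_le ?_ hC0
        rintro y ⟨z, hz, rfl⟩
        exact hfb n z (hK1 hz)
    exact hle.trans (hαeq ▸ le_csSup hSα_bdd ⟨K, hK1, hKw, rfl⟩)
  · -- alpha ≤ 2 beta
    rw [hαeq]
    refine Real.sSup_le ?_ (by linarith)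
    rintro r ⟨K, hK1, hKw, rfl⟩
    set A : ℕ → ℝ := fun n => sSup ((fun z => |f n z|) '' K) with hA
    have hA0 : ∀ n, 0 ≤ A n := by
      intro n
      refine Real.sSup_nonneg ?_
      rintro y ⟨z, -, rfl⟩
      exact abs_nonneg _
    rcases K.eq_empty_or_nonempty with hKe | hKne
    · have hz : A = fun _ => (0 : ℝ) := by
        funext n
        rw [hA]
        simp [hKe, Real.sSup_empty]
      rw [hz, limsup_const]
      linarith
    refine le_of_forall_pos_le_add fun ε hε => ?_
    set δ := ε / 4 with hδ
    have hδ0 : 0 < δ := by positivity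
    have hfreq : ∃ᶠ n in atTop, ∃ z ∈ K, limsup A atTop - δ < |f n z| := by
      have h1 : ∃ᶠ n in atTop, limsup A atTop - δ < A n :=
        frequently_lt_of_lt_limsup (isCoboundedUnder_le_of_le atTop hA0)
          (sub_lt_self _ hδ0)
      refine h1.mono fun n hn => ?_
      obtain ⟨y, ⟨z, hz, rfl⟩, hy⟩ := exists_lt_of_lt_csSup (hKne.image _) hn
      exact ⟨z, hz, hy⟩
    obtain ⟨ψ, hψ, hψP⟩ := Filter.extraction_of_frequently_atTop hfreq
    choose z hzK hzv using hψP
    obtain ⟨v, hv1, σ, hσ, hvw⟩ := myWeakSeqSubseq hK1 hKw hzK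
    set τ := ψ ∘ σ with hτ
    have hτs : StrictMono τ := hψ.comp hσ
    have hτinj : Function.Injective τ := hτs.injective
    set y : ℕ → X := fun n =>
      if h : ∃ j, τ j = n then (2 : ℝ)⁻¹ • (z (σ (h.choose)) - v) else 0 with hy
    have hyτ : ∀ j, y (τ j) = (2 : ℝ)⁻¹ • (z (σ j) - v) := by
      intro j
      have hE : ∃ j', τ j' = τ j := ⟨j, rfl⟩
      have hcj : hE.choose = j := hτinj hE.choose_spec
      simp only [hy, dif_pos hE, hcj]
    have hyB : ∀ n, y n ∈ closedBall (0 : X) 1 := by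
      intro n
      rw [mem_closedBall_zero_iff]
      by_cases h : ∃ j, τ j = n
      · have hz1 : ‖z (σ h.choose)‖ ≤ 1 := mem_closedBall_zero_iff.mp (hK1 (hzK _))
        simp only [hy, dif_pos h]
        rw [norm_smul]
        have : ‖z (σ h.choose) - v‖ ≤ 2 := by
          calc ‖z (σ h.choose) - v‖ ≤ ‖z (σ h.choose)‖ + ‖v‖ := norm_sub_le _ _
            _ ≤ 2 := by linarith
        calc ‖(2 : ℝ)⁻¹‖ * ‖z (σ h.choose) - v‖ ≤ (2 : ℝ)⁻¹ * 2 := by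
              rw [norm_inv, Real.norm_ofNat]
              exact mul_le_mul_of_nonneg_left this (by norm_num)
          _ = 1 := by norm_num
      · simp [hy, dif_neg h]
    have hywn : WeaklyNull X y := by
      intro g
      rw [Metric.tendsto_atTop]
      intro ε' hε'
      have hsub : Tendsto (fun j => g (y (τ j))) atTop (𝓝 0) := by
        have h2 : Tendsto (fun j => (2 : ℝ)⁻¹ * (g (z (σ j)) - g v)) atTop (𝓝 0) := by
          have h3 := (hvw g).sub (tendsto_const_nhds (x := g v))
          have h4 := h3.const_mul (2 : ℝ)⁻¹
          simpa using h4
        refine h2.congr fun j => ?_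
        rw [hyτ j, map_smul, map_sub, smul_eq_mul]
      obtain ⟨J, hJ⟩ := (Metric.tendsto_atTop.mp hsub) ε' hε'
      refine ⟨τ J, fun n hn => ?_⟩
      by_cases h : ∃ j, τ j = n
      · obtain ⟨j, rfl⟩ := h
        have hJj : J ≤ j := by
          by_contra hlt
          push_neg at hlt
          exact absurd (hτs hlt) (not_lt.mpr hn)
        exact hJ j hJj
      · simp only [hy, dif_neg h, map_zero]
        simpa using hε'
    have hfv : Tendsto (fun j => |f (τ j) v|) atTop (𝓝 0) := by
      have := (hf v).comp hτs.tendsto_atTop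
      simpa using this.abs
    have hev : ∀ᶠ j in atTop, |f (τ j) v| < δ := by
      have := hfv.eventually (gt_mem_nhds hδ0)
      simpa using this
    have hfreq2 : ∃ᶠ n in atTop, (limsup A atTop - 2 * δ) / 2 ≤ |f n (y n)| := by
      have hev2 : ∀ᶠ j in atTop, (limsup A atTop - 2 * δ) / 2 ≤ |f (τ j) (y (τ j))| := by
        filter_upwards [hev] with j hj
        have h1 : limsup A atTop - δ < |f (τ j) (z (σ j))| := hzv (σ j)
        have heq : |f (τ j) (y (τ j))| = |f (τ j) (z (σ j)) - f (τ j) v| / 2 := by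
          rw [hyτ j, map_smul, map_sub, smul_eq_mul, abs_mul,
            abs_of_pos (by norm_num : (0:ℝ) < 2⁻¹)]
          ring
        have h2 : |f (τ j) (z (σ j))| - |f (τ j) v|
            ≤ |f (τ j) (z (σ j)) - f (τ j) v| := abs_sub_abs_le_abs_sub _ _
        rw [heq]
        linarith
      exact hτs.tendsto_atTop.frequently hev2.frequently
    have hL : (limsup A atTop - 2 * δ) / 2 ≤ limsup (fun n => |f n (y n)|) atTop :=
      le_limsup_of_frequently_le hfreq2 (isBoundedUnder_of ⟨C, fun n => hfb n (y n) (hyB n)⟩)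
    have hLβ : (limsup A atTop - 2 * δ) / 2 ≤ betaQ f :=
      hL.trans (hβeq ▸ le_csSup hSβ_bdd ⟨y, hyB, hywn, rfl⟩)
    rw [hδ] at hLβ
    show limsup A atTop ≤ 2 * betaQ f + ε
    linarith
end
end

section
/- Let (f_n) be a sequence in X* converging to f ∈ X* in the weak* topology. Then α((f_n − f)) ≤ ca_{ρ*}((f_n)). -/
open Filter Topology Metric Set NormedSpace

noncomputable section

variable (X : Type*) [NormedAddCommGroup X] [NormedSpace ℝ X]

variable {X}

variable (X)

theorem stmt2 {X : Type*} [NormedAddCommGroup X] [NormedSpace ℝ X] [CompleteSpace X]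
    (f : ℕ → X →L[ℝ] ℝ) (f₀ : X →L[ℝ] ℝ)
    (hconv : ∀ x : X, Tendsto (fun n => f n x) atTop (𝓝 (f₀ x))) :
    alphaQ (fun n => f n - f₀) ≤ caRho f := by
  classical
  obtain ⟨C, hC⟩ : ∃ C, ∀ i, ‖f i‖ ≤ C := by
    apply banach_steinhaus
    intro x
    obtain ⟨c, hc⟩ := ((hconv x).norm).bddAbove_range
    exact ⟨c, fun i => hc ⟨i, rfl⟩⟩
  have hC0 : 0 ≤ C := le_trans (norm_nonneg _) (hC 0)
  have hSbdd : ∀ (K : Set X), K ⊆ closedBall 0 1 → ∀ n t,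
      t ∈ { t | ∃ k ≥ n, ∃ l ≥ n, ∃ x ∈ K, t = |(f k - f l) x| } → t ≤ 2*C := by
    rintro K hK1 n t ⟨k, -, l, -, x, hx, rfl⟩
    have hx1 : ‖x‖ ≤ 1 := by simpa using hK1 hx
    calc |(f k - f l) x| ≤ ‖f k - f l‖ * ‖x‖ := (f k - f l).le_opNorm x
      _ ≤ (C + C) * 1 :=
          mul_le_mul ((norm_sub_le _ _).trans (add_le_add (hC k) (hC l))) hx1
            (norm_nonneg x) (by linarith)
      _ = 2*C := by ring
  have hS0 : ∀ (K : Set X) (n : ℕ),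
      0 ≤ sSup { t | ∃ k ≥ n, ∃ l ≥ n, ∃ x ∈ K, t = |(f k - f l) x| } := by
    intro K n
    apply Real.sSup_nonneg
    rintro t ⟨k, -, l, -, x, -, rfl⟩
    exact abs_nonneg _
  have hmem : ∀ r ∈ { r | ∃ K : Set X, K ⊆ closedBall 0 1 ∧ WeaklyCompact X K ∧
      r = ⨅ n : ℕ, sSup { t | ∃ k ≥ n, ∃ l ≥ n, ∃ x ∈ K, t = |(f k - f l) x| } },
      r ≤ 2*C := by
    rintro r ⟨K, hK1, -, rfl⟩
    refine le_trans (ciInf_le ⟨0, ?_⟩ 0) ?_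
    · rintro s ⟨n, rfl⟩
      exact hS0 K n
    · exact Real.sSup_le (fun t ht => hSbdd K hK1 0 t ht) (by linarith)
  have hbddAbove : BddAbove { r | ∃ K : Set X, K ⊆ closedBall 0 1 ∧ WeaklyCompact X K ∧
      r = ⨅ n : ℕ, sSup { t | ∃ k ≥ n, ∃ l ≥ n, ∃ x ∈ K, t = |(f k - f l) x| } } :=
    ⟨2*C, hmem⟩
  have hcaRho0 : 0 ≤ caRho f := by
    have h0 : (0:ℝ) ∈ { r | ∃ K : Set X, K ⊆ closedBall 0 1 ∧ WeaklyCompact X K ∧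
        r = ⨅ n : ℕ, sSup { t | ∃ k ≥ n, ∃ l ≥ n, ∃ x ∈ K, t = |(f k - f l) x| } } := by
      refine ⟨∅, by simp, ?_, ?_⟩
      · unfold WeaklyCompact
        simp [isCompact_empty]
      · have : ∀ n : ℕ, sSup { t | ∃ k ≥ n, ∃ l ≥ n, ∃ x ∈ (∅ : Set X), t = |(f k - f l) x| }
            = 0 := by
          intro n
          convert Real.sSup_empty using 2
          ext t
          simp
        simp [this]
    exact le_csSup hbddAbove h0
  apply Real.sSup_le _ hcaRho0
  rintro r ⟨K, hK1, hK2, rfl⟩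
  set S : ℕ → ℝ := fun n => sSup { t | ∃ k ≥ n, ∃ l ≥ n, ∃ x ∈ K, t = |(f k - f l) x| }
    with hSdef
  have key : ∀ n, limsup (fun m => sSup ((fun x => |(fun n => f n - f₀) m x|) '' K)) atTop
      ≤ S n := by
    intro n
    apply Filter.limsup_le_of_le
    · refine Filter.isCoboundedUnder_le_of_le (atTop : Filter ℕ) (x := (0:ℝ)) ?_
      intro m
      apply Real.sSup_nonneg
      rintro t ⟨x, -, rfl⟩
      exact abs_nonneg _
    · filter_upwards [Filter.eventually_ge_atTop n] with m hm
      apply Real.sSup_le _ (hS0 K n)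
      rintro t ⟨x, hx, rfl⟩
      have htend : Tendsto (fun l => |(f m - f l) x|) atTop (𝓝 |(f m - f₀) x|) := by
        have h1 : Tendsto (fun l => (f m) x - (f l) x) atTop (𝓝 ((f m) x - f₀ x)) :=
          tendsto_const_nhds.sub (hconv x)
        simpa [ContinuousLinearMap.sub_apply] using h1.abs
      refine le_of_tendsto htend ?_
      filter_upwards [Filter.eventually_ge_atTop n] with l hl
      exact le_csSup ⟨2*C, fun t ht => hSbdd K hK1 n t ht⟩ ⟨m, hm, l, hl, x, hx, rfl⟩
  have hfin : limsup (fun m => sSup ((fun x => |(fun n => f n - f₀) m x|) '' K)) atTop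
      ≤ ⨅ n, S n := by
    apply le_ciInf key
  exact hfin.trans (le_csSup hbddAbove ⟨K, hK1, hK2, rfl⟩)
end
end

section
/- A Banach space X has property (K) if and only if K₁(X) = 0, where K₁(X) = sup over weak* null sequences (f_n) in B_{X*} of inf over convex block subsequences (g_n) of (f_n) of α((g_n)). (Property (K): every weak* null sequence in X* has a convex block subsequence (g_n) with α((g_n)) = 0, i.e. Mackey-null.) -/
open Filter Topology Metric Set NormedSpace

noncomputable section

variable (X : Type*) [NormedAddCommGroup X] [NormedSpace ℝ X]

variable {X}

variable (X)

-- ==================== auxiliary lemmas ====================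

section MyAux

variable {X : Type*} [NormedAddCommGroup X] [NormedSpace ℝ X]

/-- convex block with explicit witness -/
def CBW {E : Type*} [AddCommGroup E] [Module ℝ E] (x y : ℕ → E) (k : ℕ → ℕ) : Prop :=
  k 0 = 0 ∧ StrictMono k ∧ ∀ n, y n ∈ convexHull ℝ (x '' Set.Ico (k n) (k (n + 1)))

lemma cbw_id {E : Type*} [AddCommGroup E] [Module ℝ E] (x : ℕ → E) : CBW x x id :=
  ⟨rfl, strictMono_id, fun n =>
    subset_convexHull ℝ _ ⟨n, ⟨le_refl n, Nat.lt_succ_self n⟩, rfl⟩⟩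

lemma cbw_trans {E : Type*} [AddCommGroup E] [Module ℝ E] {x y z : ℕ → E} {k l : ℕ → ℕ}
    (hxy : CBW x y k) (hyz : CBW y z l) : CBW x z (k ∘ l) := by
  obtain ⟨hk0, hkm, hky⟩ := hxy
  obtain ⟨hl0, hlm, hlz⟩ := hyz
  refine ⟨by simp [hl0, hk0], hkm.comp hlm, fun n => ?_⟩
  have h1 : y '' Set.Ico (l n) (l (n + 1)) ⊆
      convexHull ℝ (x '' Set.Ico (k (l n)) (k (l (n + 1)))) := by
    rintro _ ⟨j, hj, rfl⟩
    exact convexHull_mono (Set.image_mono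
      (Set.Ico_subset_Ico (hkm.monotone hj.1) (hkm.monotone (Nat.succ_le_of_lt hj.2)))) (hky j)
  exact convexHull_min h1 (convex_convexHull ℝ _) (hlz n)

lemma memhull_abs_le {f : ℕ → X →L[ℝ] ℝ} {S : Set ℕ} {g : X →L[ℝ] ℝ}
    (hg : g ∈ convexHull ℝ (f '' S)) (x : X) {M : ℝ} (hM : ∀ j ∈ S, |f j x| ≤ M) :
    |g x| ≤ M := by
  have hconv : Convex ℝ {h : X →L[ℝ] ℝ | |h x| ≤ M} := by
    intro p hp q hq a b ha hb hab
    simp only [Set.mem_setOf_eq] at *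
    have h1 : (a • p + b • q) x = a * p x + b * q x := by simp
    rw [h1]
    calc |a * p x + b * q x| ≤ |a * p x| + |b * q x| := abs_add_le _ _
      _ = a * |p x| + b * |q x| := by
          rw [abs_mul, abs_mul, abs_of_nonneg ha, abs_of_nonneg hb]
      _ ≤ a * M + b * M :=
          add_le_add (mul_le_mul_of_nonneg_left hp ha) (mul_le_mul_of_nonneg_left hq hb)
      _ = M := by rw [← add_mul, hab, one_mul]
  have hsub : f '' S ⊆ {h : X →L[ℝ] ℝ | |h x| ≤ M} := by
    rintro _ ⟨j, hj, rfl⟩; exact hM j hj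
  exact convexHull_min hsub hconv hg

lemma memhull_norm_le {f : ℕ → X →L[ℝ] ℝ} {S : Set ℕ} {g : X →L[ℝ] ℝ}
    (hg : g ∈ convexHull ℝ (f '' S)) {M : ℝ} (hM0 : 0 ≤ M) (hM : ∀ j ∈ S, ‖f j‖ ≤ M) :
    ‖g‖ ≤ M := by
  have hsub : f '' S ⊆ closedBall (0 : X →L[ℝ] ℝ) M := by
    rintro _ ⟨j, hj, rfl⟩
    simpa [mem_closedBall_zero_iff] using hM j hj
  have := convexHull_min hsub (convex_closedBall _ _) hg
  simpa [mem_closedBall_zero_iff] using this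

/-- the defining set of `alphaQ` -/
def ASet (f : ℕ → X →L[ℝ] ℝ) : Set ℝ :=
  { r | ∃ K : Set X, K ⊆ closedBall 0 1 ∧ WeaklyCompact X K ∧
    r = limsup (fun n => sSup ((fun x => |f n x|) '' K)) atTop }

lemma alphaQ_eq (f : ℕ → X →L[ℝ] ℝ) : alphaQ f = sSup (ASet f) := rfl

lemma zero_mem_ASet (f : ℕ → X →L[ℝ] ℝ) : (0 : ℝ) ∈ ASet f := by
  refine ⟨∅, Set.empty_subset _, ?_, ?_⟩
  · show IsCompact (toWeakSpace ℝ X '' ∅)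
    simpa using isCompact_empty
  · simp [Real.sSup_empty, limsup_const]

lemma alphaQ_nonneg (f : ℕ → X →L[ℝ] ℝ) : 0 ≤ alphaQ f :=
  Real.sSup_nonneg' ⟨0, zero_mem_ASet f, le_refl 0⟩

lemma inner_sup_nonneg (f : X →L[ℝ] ℝ) (K : Set X) :
    0 ≤ sSup ((fun x => |f x|) '' K) := by
  rcases Set.eq_empty_or_nonempty K with rfl | ⟨x, hx⟩
  · simp [Real.sSup_empty]
  · exact Real.sSup_nonneg' ⟨|f x|, Set.mem_image_of_mem _ hx, abs_nonneg _⟩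

lemma inner_sup_le {f : X →L[ℝ] ℝ} {K : Set X} (hK : K ⊆ closedBall 0 1)
    {c : ℝ} (hc0 : 0 ≤ c) (hc : ‖f‖ ≤ c) :
    sSup ((fun x => |f x|) '' K) ≤ c := by
  apply Real.sSup_le _ hc0
  rintro _ ⟨x, hx, rfl⟩
  have hx1 : ‖x‖ ≤ 1 := mem_closedBall_zero_iff.1 (hK hx)
  calc |f x| = ‖f x‖ := (Real.norm_eq_abs _).symm
    _ ≤ ‖f‖ * ‖x‖ := f.le_opNorm x
    _ ≤ c * 1 := mul_le_mul hc hx1 (norm_nonneg x) hc0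
    _ = c := mul_one c

lemma mem_ASet_le {f : ℕ → X →L[ℝ] ℝ} {c : ℝ} (hc0 : 0 ≤ c) (h1 : ∀ n, ‖f n‖ ≤ c)
    {K : Set X} (hK : K ⊆ closedBall 0 1) :
    limsup (fun n => sSup ((fun x => |f n x|) '' K)) atTop ≤ c := by
  have hcob : IsCoboundedUnder (· ≤ ·) atTop (fun n => sSup ((fun x => |f n x|) '' K)) :=
    IsBoundedUnder.isCoboundedUnder_le (isBoundedUnder_of ⟨0, fun n => inner_sup_nonneg _ _⟩)
  exact limsup_le_of_le hcob
    (Eventually.of_forall fun n => inner_sup_le hK hc0 (h1 n))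

lemma ASet_bddAbove {f : ℕ → X →L[ℝ] ℝ} {c : ℝ} (hc0 : 0 ≤ c) (h1 : ∀ n, ‖f n‖ ≤ c) :
    BddAbove (ASet f) := by
  refine ⟨c, ?_⟩
  rintro r ⟨K, hK, _, rfl⟩
  exact mem_ASet_le hc0 h1 hK

lemma alphaQ_le_one {f : ℕ → X →L[ℝ] ℝ} (h1 : ∀ n, ‖f n‖ ≤ 1) : alphaQ f ≤ 1 := by
  rw [alphaQ_eq]
  apply Real.sSup_le _ zero_le_one
  rintro r ⟨K, hK, _, rfl⟩
  exact mem_ASet_le zero_le_one h1 hK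

lemma weakStarNull_cbw {f g : ℕ → X →L[ℝ] ℝ} {k : ℕ → ℕ}
    (hf : WeakStarNull X f) (hcb : CBW f g k) : WeakStarNull X g := by
  obtain ⟨hk0, hkm, hky⟩ := hcb
  intro x
  rw [Metric.tendsto_atTop]
  intro ε hε
  obtain ⟨N, hN⟩ := Metric.tendsto_atTop.1 (hf x) (ε / 2) (by linarith)
  refine ⟨N, fun n hn => ?_⟩
  have hb : |g n x| ≤ ε / 2 := by
    apply memhull_abs_le (hky n) x
    intro j hj
    have hNj : N ≤ j := le_trans (le_trans hn hkm.le_apply) hj.1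
    have := hN j hNj
    rw [Real.dist_eq, sub_zero] at this
    linarith
  rw [Real.dist_eq, sub_zero]
  linarith

lemma norm_le_one_cbw {f g : ℕ → X →L[ℝ] ℝ} {k : ℕ → ℕ}
    (hf : ∀ n, ‖f n‖ ≤ 1) (hcb : CBW f g k) : ∀ n, ‖g n‖ ≤ 1 := fun n =>
  memhull_norm_le (hcb.2.2 n) zero_le_one fun j _ => hf j

end MyAux

section MyMain

variable {X : Type*} [NormedAddCommGroup X] [NormedSpace ℝ X]

/-- the T-set for K1 -/
def TSet (f : ℕ → X →L[ℝ] ℝ) : Set ℝ := { s | ∃ g, IsConvexBlock f g ∧ s = alphaQ g }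

lemma TSet_nonempty (f : ℕ → X →L[ℝ] ℝ) : (TSet f).Nonempty :=
  ⟨alphaQ f, f, ⟨id, (cbw_id f).1, (cbw_id f).2.1, (cbw_id f).2.2⟩, rfl⟩

lemma TSet_bddBelow (f : ℕ → X →L[ℝ] ℝ) : BddBelow (TSet f) := by
  refine ⟨0, ?_⟩; rintro s ⟨g, _, rfl⟩; exact alphaQ_nonneg g

lemma sInf_TSet_nonneg (f : ℕ → X →L[ℝ] ℝ) : 0 ≤ sInf (TSet f) := by
  apply le_csInf (TSet_nonempty f)
  rintro s ⟨g, _, rfl⟩; exact alphaQ_nonneg g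

/-- the K1 set -/
def K1Set (X : Type*) [NormedAddCommGroup X] [NormedSpace ℝ X] : Set ℝ :=
  { r | ∃ f : ℕ → X →L[ℝ] ℝ, (∀ n, ‖f n‖ ≤ 1) ∧ WeakStarNull X f ∧ r = sInf (TSet f) }

lemma K1_eq : K1 X = sSup (K1Set X) := rfl

lemma K1Set_bddAbove : BddAbove (K1Set X) := by
  refine ⟨1, ?_⟩
  rintro r ⟨f, h1, _, rfl⟩
  calc sInf (TSet f) ≤ alphaQ f :=
        csInf_le (TSet_bddBelow f)
          ⟨f, ⟨id, (cbw_id f).1, (cbw_id f).2.1, (cbw_id f).2.2⟩, rfl⟩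
    _ ≤ 1 := alphaQ_le_one h1

theorem forward_dir (hPK : PropertyK X) : K1 X = 0 := by
  have hinf : ∀ f : ℕ → X →L[ℝ] ℝ, WeakStarNull X f → sInf (TSet f) = 0 := by
    intro f hf
    obtain ⟨g, hg, hg0⟩ := hPK f hf
    have h0 : (0 : ℝ) ∈ TSet f := ⟨g, hg, hg0.symm⟩
    exact le_antisymm (csInf_le (TSet_bddBelow f) h0) (sInf_TSet_nonneg f)
  have hset : K1Set X = {0} := by
    ext r
    constructor
    · rintro ⟨f, _, hf, rfl⟩
      exact hinf f hf
    · rintro (rfl : r = 0)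
      refine ⟨fun _ => 0, fun n => by simp, fun x => by simpa using tendsto_const_nhds, ?_⟩
      exact (hinf _ (fun x => by simpa using tendsto_const_nhds)).symm
  rw [K1_eq, hset, csSup_singleton]

end MyMain

section MyReverse

variable {X : Type*} [NormedAddCommGroup X] [NormedSpace ℝ X]

/-- existence of good convex blocks from K1 = 0 -/
lemma ex_block (hK1 : K1 X = 0) (g : ℕ → X →L[ℝ] ℝ) (hg1 : ∀ n, ‖g n‖ ≤ 1)
    (hg2 : WeakStarNull X g) {ε : ℝ} (hε : 0 < ε) :
    ∃ (g' : ℕ → X →L[ℝ] ℝ) (κ : ℕ → ℕ), CBW g g' κ ∧ alphaQ g' < ε := by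
  have hmem : sInf (TSet g) ∈ K1Set X := ⟨g, hg1, hg2, rfl⟩
  have h0 : sInf (TSet g) ≤ 0 := by
    rw [← hK1, K1_eq]
    exact le_csSup K1Set_bddAbove hmem
  obtain ⟨s, hsT, hs⟩ := exists_lt_of_csInf_lt (TSet_nonempty g) (lt_of_le_of_lt h0 hε)
  obtain ⟨g', ⟨κ, hκ0, hκm, hκ⟩, rfl⟩ := hsT
  exact ⟨g', κ, ⟨hκ0, hκm, hκ⟩, hs⟩

lemma num_conclusion {c r : ℝ} (hc0 : 0 < c)
    (key : ∀ (m : ℕ) (ε : ℝ), 0 < ε → r ≤ c * (1 / (m + 1) + ε)) : r ≤ 0 := by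
  by_contra hcon
  push_neg at hcon
  obtain ⟨m, hm⟩ := exists_nat_gt (4 * c / r)
  have hm0 : (0 : ℝ) < (m : ℝ) + 1 := by positivity
  have h1 := key m (r / (4 * c)) (by positivity)
  have h4 : c * (1 / ((m : ℝ) + 1) + r / (4 * c)) = c / ((m : ℝ) + 1) + r / 4 := by
    field_simp
  have h5 : c / ((m : ℝ) + 1) < r / 4 := by
    rw [div_lt_iff₀ hm0]
    have h6 : 4 * c / r < (m : ℝ) + 1 := lt_of_lt_of_le hm (by linarith)
    rw [div_lt_iff₀ hcon] at h6
    nlinarith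
  rw [h4] at h1
  linarith

theorem reverse_dir [CompleteSpace X] (hK1 : K1 X = 0) : PropertyK X := by
  intro f hf
  -- boundedness by Banach–Steinhaus
  have hb : ∀ x, ∃ C, ∀ n, ‖f n x‖ ≤ C := by
    intro x
    obtain ⟨C, hC⟩ := (hf x).abs.bddAbove_range
    exact ⟨C, fun n => by
      simpa [Real.norm_eq_abs] using hC (Set.mem_range_self (f := fun n => |f n x|) n)⟩
  obtain ⟨C, hC⟩ := banach_steinhaus hb
  set c : ℝ := max C 1 with hc_def
  have hc1 : (1 : ℝ) ≤ c := le_max_right _ _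
  have hc0 : (0 : ℝ) < c := lt_of_lt_of_le zero_lt_one hc1
  set f' : ℕ → X →L[ℝ] ℝ := fun n => c⁻¹ • f n with hf'_def
  have hf'norm : ∀ n, ‖f' n‖ ≤ 1 := by
    intro n
    have : ‖f' n‖ = c⁻¹ * ‖f n‖ := by
      have h1 := norm_smul c⁻¹ (f n)
      rw [Real.norm_eq_abs, abs_of_pos (inv_pos.2 hc0)] at h1
      exact h1
    rw [this]
    have hfc : ‖f n‖ ≤ c := le_trans (hC n) (le_max_left _ _)
    calc c⁻¹ * ‖f n‖ ≤ c⁻¹ * c :=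
          mul_le_mul_of_nonneg_left hfc (inv_pos.2 hc0).le
      _ = 1 := inv_mul_cancel₀ hc0.ne'
  have hf'null : WeakStarNull X f' := by
    intro x
    have := (hf x).const_mul c⁻¹
    simpa [hf'_def] using this
  -- recursion
  classical
  let S := {p : (ℕ → X →L[ℝ] ℝ) × (ℕ → ℕ) //
      (∀ n, ‖p.1 n‖ ≤ 1) ∧ WeakStarNull X p.1 ∧ CBW f' p.1 p.2}
  have ex2 : ∀ (m : ℕ) (p : S),
      ∃ (g' : ℕ → X →L[ℝ] ℝ) (κ : ℕ → ℕ), CBW p.1.1 g' κ ∧ alphaQ g' < 1 / (m + 1) := by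
    intro m p
    exact ex_block hK1 p.1.1 p.2.1 p.2.2.1 (by positivity)
  choose F K hFK hFa using ex2
  let next : ℕ → S → S := fun m p =>
    ⟨(F m p, p.1.2 ∘ K m p), by
      refine ⟨?_, ?_, ?_⟩
      · exact norm_le_one_cbw p.2.1 (hFK m p)
      · exact weakStarNull_cbw p.2.2.1 (hFK m p)
      · show CBW f' (F m p) (p.1.2 ∘ K m p)
        exact cbw_trans p.2.2.2 (hFK m p)⟩
  let D : ℕ → S := fun m => Nat.rec ⟨(f', id), hf'norm, hf'null, cbw_id f'⟩ next m
  have hDsucc : ∀ m, D (m + 1) = next m (D m) := fun m => rfl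
  set Gm : ℕ → ℕ → X →L[ℝ] ℝ := fun m => (D m).1.1 with hGm_def
  set Cm : ℕ → ℕ → ℕ := fun m => (D m).1.2 with hCm_def
  have hGle : ∀ m n, ‖Gm m n‖ ≤ 1 := fun m => (D m).2.1
  have hGC : ∀ m, CBW f' (Gm m) (Cm m) := fun m => (D m).2.2.2
  have hGstep : ∀ m, CBW (Gm m) (Gm (m + 1)) (K m (D m)) := fun m => hFK m (D m)
  have hGa : ∀ m : ℕ, alphaQ (Gm (m + 1)) < 1 / (m + 1) := fun m => hFa m (D m)
  have hCstep : ∀ m, Cm (m + 1) = Cm m ∘ K m (D m) := fun m => rfl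
  -- chain
  have hchain : ∀ m n, m ≤ n → ∃ T : ℕ → ℕ, CBW (Gm m) (Gm n) T := by
    intro m n hmn
    induction n, hmn using Nat.le_induction with
    | base => exact ⟨id, cbw_id _⟩
    | succ n hmn ih =>
      obtain ⟨T, hT⟩ := ih
      exact ⟨T ∘ K n (D n), cbw_trans hT (hGstep n)⟩
  -- diagonal
  set h : ℕ → X →L[ℝ] ℝ := fun n => Gm n n with hh_def
  set k : ℕ → ℕ := fun n => Cm n n with hk_def
  have hCsucc : ∀ n j, Cm n j ≤ Cm (n + 1) j := by
    intro n j
    rw [hCstep n]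
    exact (hGC n).2.1.monotone (hGstep n).2.1.le_apply
  have hk0 : k 0 = 0 := (hGC 0).1
  have hkst : StrictMono k := by
    apply strictMono_nat_of_lt_succ
    intro n
    calc k n = Cm n n := rfl
      _ < Cm n (n + 1) := (hGC n).2.1 (Nat.lt_succ_self n)
      _ ≤ Cm (n + 1) (n + 1) := hCsucc n (n + 1)
  have hmemb : ∀ n, h n ∈ convexHull ℝ (f' '' Set.Ico (k n) (k (n + 1))) := by
    intro n
    refine convexHull_mono (Set.image_mono (Set.Ico_subset_Ico le_rfl (hCsucc n (n + 1))))
      ((hGC n).2.2 n)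
  -- tail property
  have htail : ∀ m n, m ≤ n → ∃ Sn : Set ℕ, Sn ⊆ Set.Ici n ∧
      h n ∈ convexHull ℝ (Gm m '' Sn) := by
    intro m n hmn
    obtain ⟨T, hT⟩ := hchain m n hmn
    refine ⟨Set.Ico (T n) (T (n + 1)), ?_, hT.2.2 n⟩
    intro j hj
    exact le_trans hT.2.1.le_apply hj.1
  -- the final sequence g
  set g : ℕ → X →L[ℝ] ℝ := fun n => c • h n with hg_def
  have hscale : ∀ (I : Set ℕ) (v : X →L[ℝ] ℝ), v ∈ convexHull ℝ (f' '' I) →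
      c • v ∈ convexHull ℝ (f '' I) := by
    intro I v hv
    have hlin : IsLinearMap ℝ (fun w : X →L[ℝ] ℝ => c • w) :=
      ⟨fun a b => smul_add c a b, fun a w => smul_comm c a w⟩
    have h1 := Set.mem_image_of_mem (fun w : X →L[ℝ] ℝ => c • w) hv
    rw [hlin.image_convexHull] at h1
    have h2 : (fun w : X →L[ℝ] ℝ => c • w) '' (f' '' I) = f '' I := by
      rw [Set.image_image]
      apply Set.image_congr
      intro j _
      simp [hf'_def, smul_smul, mul_inv_cancel₀ hc0.ne']
    rwa [h2] at h1
  have hcb_g : IsConvexBlock f g :=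
    ⟨k, hk0, hkst, fun n => hscale _ _ (hmemb n)⟩
  have hnormh : ∀ n, ‖h n‖ ≤ 1 := fun n => hGle n n
  -- alphaQ g = 0
  refine ⟨g, hcb_g, ?_⟩
  have hAset : ASet g = {0} := by
    ext r
    simp only [Set.mem_singleton_iff]
    constructor
    · rintro ⟨K', hK', hKw, rfl⟩
      set u : ℕ → ℝ := fun n => sSup ((fun x => |g n x|) '' K') with hu_def
      have hu0 : ∀ n, 0 ≤ u n := fun n => inner_sup_nonneg _ _
      have hgc : ∀ n, ‖g n‖ ≤ c := by
        intro n
        have : ‖g n‖ = c * ‖h n‖ := by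
          have h1 := norm_smul c (h n)
          rw [Real.norm_eq_abs, abs_of_pos hc0] at h1
          exact h1
        rw [this]
        calc c * ‖h n‖ ≤ c * 1 := mul_le_mul_of_nonneg_left (hnormh n) hc0.le
          _ = c := mul_one c
      have huc : ∀ n, u n ≤ c := fun n => inner_sup_le hK' hc0.le (hgc n)
      have hr0 : 0 ≤ limsup u atTop :=
        le_limsup_of_frequently_le (Frequently.of_forall hu0)
          (isBoundedUnder_of ⟨c, huc⟩)
      have key : ∀ (m : ℕ) (ε : ℝ), 0 < ε →
          limsup u atTop ≤ c * (alphaQ (Gm m) + ε) := by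
        intro m ε hε
        set s : ℕ → ℝ := fun j => sSup ((fun x => |Gm m j x|) '' K') with hs_def
        have hs0 : ∀ j, 0 ≤ s j := fun j => inner_sup_nonneg _ _
        have hs1 : ∀ j, s j ≤ 1 := fun j => inner_sup_le hK' zero_le_one (hGle m j)
        set L : ℝ := limsup s atTop with hL_def
        have hL0 : 0 ≤ L :=
          le_limsup_of_frequently_le (Frequently.of_forall hs0)
            (isBoundedUnder_of ⟨1, hs1⟩)
        have hLa : L ≤ alphaQ (Gm m) := by
          rw [alphaQ_eq]
          exact le_csSup (ASet_bddAbove zero_le_one (hGle m)) ⟨K', hK', hKw, rfl⟩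
        have hev : ∀ᶠ j in atTop, s j < L + ε :=
          eventually_lt_of_limsup_lt (lt_add_of_pos_right L hε)
            (isBoundedUnder_of ⟨1, hs1⟩)
        obtain ⟨N, hN⟩ := eventually_atTop.1 hev
        have hub : ∀ n ≥ max m N, u n ≤ c * (L + ε) := by
          intro n hn
          obtain ⟨Sn, hSn, hmemS⟩ := htail m n (le_trans (le_max_left m N) hn)
          have hx : ∀ x ∈ K', |h n x| ≤ L + ε := by
            intro x hxK
            apply memhull_abs_le hmemS x
            intro j hj
            have hjN : N ≤ j := le_trans (le_trans (le_max_right m N) hn) (hSn hj)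
            have hbdd : BddAbove ((fun x => |Gm m j x|) '' K') := by
              refine ⟨1, ?_⟩
              rintro _ ⟨y, hy, rfl⟩
              have hy1 : ‖y‖ ≤ 1 := mem_closedBall_zero_iff.1 (hK' hy)
              calc |Gm m j y| = ‖Gm m j y‖ := (Real.norm_eq_abs _).symm
                _ ≤ ‖Gm m j‖ * ‖y‖ := (Gm m j).le_opNorm y
                _ ≤ 1 * 1 := mul_le_mul (hGle m j) hy1 (norm_nonneg y) zero_le_one
                _ = 1 := one_mul 1
            calc |Gm m j x| ≤ s j := le_csSup hbdd (Set.mem_image_of_mem _ hxK)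
              _ ≤ L + ε := (hN j hjN).le
          apply Real.sSup_le
          · rintro _ ⟨x, hxK, rfl⟩
            show |g n x| ≤ c * (L + ε)
            have heq : |g n x| = c * |h n x| := by
              show |(c • h n) x| = c * |h n x|
              rw [ContinuousLinearMap.smul_apply, smul_eq_mul, abs_mul, abs_of_pos hc0]
            rw [heq]
            exact mul_le_mul_of_nonneg_left (hx x hxK) hc0.le
          · positivity
        have hcob : IsCoboundedUnder (· ≤ ·) atTop u :=
          IsBoundedUnder.isCoboundedUnder_le (isBoundedUnder_of ⟨0, hu0⟩)
        calc limsup u atTop ≤ c * (L + ε) :=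
              limsup_le_of_le hcob (eventually_atTop.2 ⟨max m N, hub⟩)
          _ ≤ c * (alphaQ (Gm m) + ε) :=
              mul_le_mul_of_nonneg_left (add_le_add_left hLa ε) hc0.le
      have hrle : limsup u atTop ≤ 0 := by
        apply num_conclusion hc0
        intro m ε hε
        calc limsup u atTop ≤ c * (alphaQ (Gm (m + 1)) + ε) := key (m + 1) ε hε
          _ ≤ c * (1 / ((m : ℝ) + 1) + ε) :=
              mul_le_mul_of_nonneg_left (add_le_add_left (hGa m).le ε) hc0.le
      exact le_antisymm hrle hr0
    · rintro rfl
      exact zero_mem_ASet g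
  rw [alphaQ_eq, hAset, csSup_singleton]

end MyReverse

theorem stmt5 {X : Type*} [NormedAddCommGroup X] [NormedSpace ℝ X] [CompleteSpace X] :
    PropertyK X ↔ K1 X = 0 :=
  ⟨forward_dir, reverse_dir⟩
end
end

section
/- For any Banach space X, K₂(X) ≤ K₁(X) ≤ 2K₂(X), where K₁(X) = sup over weak* null sequences (f_n) in B_{X*} of inf over convex block subsequences (g_n) of α((g_n)), and K₂(X) is defined analogously with β in place of α. -/
open Filter Topology Metric Set NormedSpace

noncomputable section

variable (X : Type*) [NormedAddCommGroup X] [NormedSpace ℝ X]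

variable {X}

variable (X)

section Aux

variable {E : Type*} [NormedAddCommGroup E] [NormedSpace ℝ E]

lemma abs_apply_le_one {g : E →L[ℝ] ℝ} (hg : ‖g‖ ≤ 1) {x : E} (hx : ‖x‖ ≤ 1) : |g x| ≤ 1 := by
  calc |g x| = ‖g x‖ := (Real.norm_eq_abs _).symm
    _ ≤ ‖g‖ * ‖x‖ := g.le_opNorm x
    _ ≤ 1 * 1 := by
        apply mul_le_mul hg hx (norm_nonneg _) zero_le_one
    _ = 1 := one_mul 1

lemma blk_norm_le {f g : ℕ → E →L[ℝ] ℝ} (hf : ∀ n, ‖f n‖ ≤ 1) (hfg : IsConvexBlock f g)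
    (n : ℕ) : ‖g n‖ ≤ 1 := by
  obtain ⟨k, hk0, hkm, hmem⟩ := hfg
  have h1 : f '' Set.Ico (k n) (k (n + 1)) ⊆ closedBall 0 1 := by
    rintro - ⟨m, -, rfl⟩
    simpa [mem_closedBall_zero_iff] using hf m
  have := convexHull_min h1 (convex_closedBall _ _) (hmem n)
  simpa [mem_closedBall_zero_iff] using this

lemma blk_apply_le {f g : ℕ → E →L[ℝ] ℝ} (hfg : IsConvexBlock f g) (x : E) {n : ℕ} {c : ℝ}
    (hc : ∀ m, n ≤ m → |f m x| ≤ c) : |g n x| ≤ c := by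
  obtain ⟨k, hk0, hkm, hmem⟩ := hfg
  have hconv : Convex ℝ {h : E →L[ℝ] ℝ | |h x| ≤ c} := by
    intro h₁ h₁m h₂ h₂m a b ha hb hab
    simp only [Set.mem_setOf_eq] at *
    have hval : (a • h₁ + b • h₂) x = a * h₁ x + b * h₂ x := by simp
    rw [hval]
    calc |a * h₁ x + b * h₂ x| ≤ |a * h₁ x| + |b * h₂ x| := abs_add_le _ _
      _ = a * |h₁ x| + b * |h₂ x| := by
          rw [abs_mul, abs_mul, abs_of_nonneg ha, abs_of_nonneg hb]
      _ ≤ a * c + b * c := by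
          apply add_le_add (mul_le_mul_of_nonneg_left h₁m ha) (mul_le_mul_of_nonneg_left h₂m hb)
      _ = c := by rw [← add_mul, hab, one_mul]
  have h1 : f '' Set.Ico (k n) (k (n + 1)) ⊆ {h | |h x| ≤ c} := by
    rintro - ⟨m, hm, rfl⟩
    exact hc m (le_trans hkm.le_apply hm.1)
  exact convexHull_min h1 hconv (hmem n)

lemma blk_wstar_null {f g : ℕ → E →L[ℝ] ℝ} (hf : WeakStarNull E f) (hfg : IsConvexBlock f g) :
    WeakStarNull E g := by
  intro x
  rw [Metric.tendsto_atTop]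
  intro ε hε
  obtain ⟨N, hN⟩ := Metric.tendsto_atTop.mp (hf x) (ε / 2) (by positivity)
  refine ⟨N, fun n hn => ?_⟩
  have hb : |g n x| ≤ ε / 2 := by
    apply blk_apply_le hfg x
    intro m hm
    have := hN m (le_trans hn hm)
    rw [Real.dist_eq, sub_zero] at this
    exact this.le
  rw [Real.dist_eq, sub_zero]
  calc |g n x| ≤ ε / 2 := hb
    _ < ε := by linarith

lemma cb_self (f : ℕ → E →L[ℝ] ℝ) : IsConvexBlock f f := by
  refine ⟨id, rfl, strictMono_id, fun n => ?_⟩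
  apply subset_convexHull
  refine ⟨n, ?_, rfl⟩
  simp

lemma pairing_inj : Function.Injective ⇑(topDualPairing ℝ E).flip := by
  intro a b h
  have hz : ∀ f : E →L[ℝ] ℝ, f (a - b) = 0 := by
    intro f
    have := LinearMap.congr_fun h f
    simp only [LinearMap.flip_apply, topDualPairing_apply] at this
    simp [map_sub, this]
  have := NormedSpace.eq_zero_of_forall_dual_eq_zero ℝ hz
  exact sub_eq_zero.mp this

lemma weaklyCompact_insert_range {x : ℕ → E} (hx : WeaklyNull E x) :
    WeaklyCompact E (insert 0 (Set.range x)) := by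
  have ht : Tendsto (fun n => toWeakSpace ℝ E (x n)) atTop (𝓝 (toWeakSpace ℝ E 0)) := by
    refine (WeakBilin.tendsto_iff_forall_eval_tendsto (topDualPairing ℝ E).flip pairing_inj).mpr ?_
    intro y
    show Tendsto (fun n => y (x n)) atTop (𝓝 (y 0))
    rw [map_zero]; exact hx y
  have hc := ht.isCompact_insert_range
  unfold WeaklyCompact
  convert hc using 1
  rw [Set.image_insert_eq]
  congr 1
  ext w
  simp [Set.range_comp]

lemma limsup_le_one' {u : ℕ → ℝ} (h0 : ∀ n, 0 ≤ u n) (h1 : ∀ n, u n ≤ 1) :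
    limsup u atTop ≤ 1 := by
  exact Filter.limsup_le_of_le
    (Filter.IsBoundedUnder.isCoboundedUnder_le ⟨0, eventually_map.mpr (Eventually.of_forall h0)⟩)
    (Eventually.of_forall h1)

lemma limsup_nonneg' {u : ℕ → ℝ} (h0 : ∀ n, 0 ≤ u n) (h1 : ∀ n, u n ≤ 1) :
    0 ≤ limsup u atTop := by
  exact Filter.le_limsup_of_frequently_le (Frequently.of_forall h0)
    ⟨1, eventually_map.mpr (Eventually.of_forall h1)⟩

lemma bddAbove_abs_image {g : E →L[ℝ] ℝ} (hg : ‖g‖ ≤ 1) {K : Set E} (hK : K ⊆ closedBall 0 1) :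
    BddAbove ((fun x => |g x|) '' K) := by
  refine ⟨1, ?_⟩
  rintro - ⟨z, hz, rfl⟩
  exact abs_apply_le_one hg (mem_closedBall_zero_iff.mp (hK hz))

lemma sSup_abs_image_le {g : E →L[ℝ] ℝ} (hg : ‖g‖ ≤ 1) {K : Set E} (hK : K ⊆ closedBall 0 1) :
    sSup ((fun x => |g x|) '' K) ≤ 1 := by
  rcases K.eq_empty_or_nonempty with rfl | hne
  · simp [Real.sSup_empty]
  · apply csSup_le (hne.image _)
    rintro - ⟨z, hz, rfl⟩
    exact abs_apply_le_one hg (mem_closedBall_zero_iff.mp (hK hz))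

lemma sSup_abs_image_nonneg {g : E →L[ℝ] ℝ} (hg : ‖g‖ ≤ 1) {K : Set E}
    (hK : K ⊆ closedBall 0 1) : 0 ≤ sSup ((fun x => |g x|) '' K) := by
  rcases K.eq_empty_or_nonempty with rfl | ⟨z, hz⟩
  · simp [Real.sSup_empty]
  · exact le_trans (abs_nonneg (g z)) (le_csSup (bddAbove_abs_image hg hK) ⟨z, hz, rfl⟩)

lemma alphaQ_bddAbove {g : ℕ → E →L[ℝ] ℝ} (hg : ∀ n, ‖g n‖ ≤ 1) :
    BddAbove { r | ∃ K : Set E, K ⊆ closedBall 0 1 ∧ WeaklyCompact E K ∧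
      r = limsup (fun n => sSup ((fun x => |g n x|) '' K)) atTop } := by
  refine ⟨1, ?_⟩
  rintro - ⟨K, hKb, -, rfl⟩
  exact limsup_le_one' (fun n => sSup_abs_image_nonneg (hg n) hKb)
    (fun n => sSup_abs_image_le (hg n) hKb)

lemma alphaQ_zero_mem (g : ℕ → E →L[ℝ] ℝ) :
    (0 : ℝ) ∈ { r | ∃ K : Set E, K ⊆ closedBall 0 1 ∧ WeaklyCompact E K ∧
      r = limsup (fun n => sSup ((fun x => |g n x|) '' K)) atTop } := by
  refine ⟨∅, Set.empty_subset _, ?_, ?_⟩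
  · unfold WeaklyCompact
    simp [isCompact_empty]
  · simp [Real.sSup_empty, limsup_const]

lemma alphaQ_nonneg_s6 {g : ℕ → E →L[ℝ] ℝ} (hg : ∀ n, ‖g n‖ ≤ 1) : 0 ≤ alphaQ g :=
  le_csSup (alphaQ_bddAbove hg) (alphaQ_zero_mem g)

lemma alphaQ_le_one_s6 {g : ℕ → E →L[ℝ] ℝ} (hg : ∀ n, ‖g n‖ ≤ 1) : alphaQ g ≤ 1 := by
  apply csSup_le ⟨0, alphaQ_zero_mem g⟩
  rintro - ⟨K, hKb, -, rfl⟩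
  exact limsup_le_one' (fun n => sSup_abs_image_nonneg (hg n) hKb)
    (fun n => sSup_abs_image_le (hg n) hKb)

lemma betaQ_bddAbove {g : ℕ → E →L[ℝ] ℝ} (hg : ∀ n, ‖g n‖ ≤ 1) :
    BddAbove { r | ∃ x : ℕ → E, (∀ n, x n ∈ closedBall (0 : E) 1) ∧ WeaklyNull E x ∧
      r = limsup (fun n => |g n (x n)|) atTop } := by
  refine ⟨1, ?_⟩
  rintro - ⟨x, hxb, -, rfl⟩
  exact limsup_le_one' (fun n => abs_nonneg _)
    (fun n => abs_apply_le_one (hg n) (mem_closedBall_zero_iff.mp (hxb n)))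

lemma betaQ_zero_mem (g : ℕ → E →L[ℝ] ℝ) :
    (0 : ℝ) ∈ { r | ∃ x : ℕ → E, (∀ n, x n ∈ closedBall (0 : E) 1) ∧ WeaklyNull E x ∧
      r = limsup (fun n => |g n (x n)|) atTop } := by
  refine ⟨fun _ => 0, fun n => ?_, fun f => ?_, ?_⟩
  · simp [mem_closedBall_zero_iff]
  · simpa using tendsto_const_nhds
  · simp [limsup_const]

lemma betaQ_nonneg {g : ℕ → E →L[ℝ] ℝ} (hg : ∀ n, ‖g n‖ ≤ 1) : 0 ≤ betaQ g :=
  le_csSup (betaQ_bddAbove hg) (betaQ_zero_mem g)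

lemma betaQ_le_one {g : ℕ → E →L[ℝ] ℝ} (hg : ∀ n, ‖g n‖ ≤ 1) : betaQ g ≤ 1 := by
  apply csSup_le ⟨0, betaQ_zero_mem g⟩
  rintro - ⟨x, hxb, -, rfl⟩
  exact limsup_le_one' (fun n => abs_nonneg _)
    (fun n => abs_apply_le_one (hg n) (mem_closedBall_zero_iff.mp (hxb n)))

lemma betaQ_le_alphaQ {g : ℕ → E →L[ℝ] ℝ} (hg : ∀ n, ‖g n‖ ≤ 1) : betaQ g ≤ alphaQ g := by
  apply csSup_le ⟨0, betaQ_zero_mem g⟩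
  rintro - ⟨x, hxb, hxnull, rfl⟩
  set K : Set E := insert 0 (Set.range x) with hKdef
  have hKb : K ⊆ closedBall 0 1 := by
    rintro y (rfl | ⟨n, rfl⟩)
    · simp [mem_closedBall_zero_iff]
    · exact hxb n
  have hKc : WeaklyCompact E K := weaklyCompact_insert_range hxnull
  have hle : ∀ n, |g n (x n)| ≤ sSup ((fun y => |g n y|) '' K) := by
    intro n
    apply le_csSup (bddAbove_abs_image (hg n) hKb)
    exact ⟨x n, by simp [hKdef], rfl⟩
  have h1 : limsup (fun n => |g n (x n)|) atTop ≤
      limsup (fun n => sSup ((fun y => |g n y|) '' K)) atTop := by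
    exact Filter.limsup_le_limsup (Eventually.of_forall hle)
      (Filter.IsBoundedUnder.isCoboundedUnder_le
        ⟨0, eventually_map.mpr (Eventually.of_forall fun n => abs_nonneg _)⟩)
      ⟨1, eventually_map.mpr (Eventually.of_forall fun n =>
        sSup_abs_image_le (hg n) hKb)⟩
  exact le_trans h1 (le_csSup (alphaQ_bddAbove hg) ⟨K, hKb, hKc, rfl⟩)

lemma weak_seq_subseq {K : Set E} (hKc : WeaklyCompact E K) (hKb : K ⊆ closedBall 0 1)
    {x : ℕ → E} (hx : ∀ j, x j ∈ K) :
    ∃ φ : ℕ → ℕ, StrictMono φ ∧ ∃ a : E, ‖a‖ ≤ 1 ∧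
      ∀ f : E →L[ℝ] ℝ, Tendsto (fun i => f (x (φ i))) atTop (𝓝 (f a)) := by
  have hxb : ∀ j, ‖x j‖ ≤ 1 := fun j => mem_closedBall_zero_iff.mp (hKb (hx j))
  -- separable closed subspace containing the sequence
  set Z : Submodule ℝ E := (Submodule.span ℝ (Set.range x)).topologicalClosure with hZdef
  have hZsep : TopologicalSpace.IsSeparable (Z : Set E) := by
    have h1 : TopologicalSpace.IsSeparable
        ((Submodule.span ℝ (Set.range x) : Submodule ℝ E) : Set E) :=
      (Set.countable_range x).isSeparable.span
    have := h1.closure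
    simpa [hZdef, Submodule.topologicalClosure_coe] using this
  obtain ⟨c, hc_count, hc_sub⟩ := hZsep
  obtain ⟨y, hy⟩ := (hc_count.insert 0).exists_eq_range (Set.insert_nonempty 0 c)
  choose F hF1 hF2 using fun k => exists_dual_vector'' ℝ (y k)
  -- the countable family F separates points of Z
  have hsep : ∀ z : E, z ∈ (Z : Set E) → z ≠ 0 → ∃ k, F k z ≠ 0 := by
    intro z hz hz0
    have hzpos : 0 < ‖z‖ := norm_pos_iff.mpr hz0
    have hz' : z ∈ closure (insert 0 c) :=
      closure_mono (Set.subset_insert 0 c) (hc_sub hz)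
    obtain ⟨p, hp, hdist⟩ := Metric.mem_closure_iff.mp hz' (‖z‖ / 3) (by positivity)
    rw [hy] at hp
    obtain ⟨k, rfl⟩ := hp
    refine ⟨k, fun h0 => ?_⟩
    have h1 : ‖F k z - F k (y k)‖ ≤ ‖z - y k‖ := by
      calc ‖F k z - F k (y k)‖ = ‖F k (z - y k)‖ := by rw [map_sub]
        _ ≤ ‖F k‖ * ‖z - y k‖ := (F k).le_opNorm _
        _ ≤ 1 * ‖z - y k‖ := mul_le_mul_of_nonneg_right (hF1 k) (norm_nonneg _)
        _ = ‖z - y k‖ := one_mul _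
    rw [h0, hF2 k, zero_sub, norm_neg] at h1
    have h2 : ‖z‖ - ‖z - y k‖ ≤ ‖y k‖ := by
      have := norm_sub_norm_le z (y k)
      have h3 : ‖y k‖ = ‖y k‖ := rfl
      calc ‖z‖ - ‖z - y k‖ ≤ ‖z‖ - (‖z‖ - ‖y k‖) := by linarith [norm_sub_norm_le z (y k)]
        _ = ‖y k‖ := by ring
    have h4 : ‖z - y k‖ < ‖z‖ / 3 := by rwa [← dist_eq_norm]
    rw [Real.norm_eq_abs] at h1
    have h5 : ‖y k‖ ≤ ‖z - y k‖ := le_trans (le_abs_self _) h1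
    linarith
  -- diagonal extraction via compactness of [-1,1]^ℕ
  set u : ℕ → ℕ → ℝ := fun j k => F k (x j) with hudef
  have hucomp : IsCompact (Set.univ.pi fun _ : ℕ => Icc (-1 : ℝ) 1) :=
    isCompact_univ_pi fun _ => isCompact_Icc
  have humem : ∀ j, u j ∈ Set.univ.pi fun _ : ℕ => Icc (-1 : ℝ) 1 := by
    intro j k _
    have : |F k (x j)| ≤ 1 := abs_apply_le_one (hF1 k) (hxb j)
    exact abs_le.mp this
  obtain ⟨L, -, φ, hφ, hconv⟩ := hucomp.tendsto_subseq humem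
  have hptwise : ∀ k, Tendsto (fun j => F k (x (φ j))) atTop (𝓝 (L k)) := by
    intro k
    have := (tendsto_pi_nhds.mp hconv) k
    exact this
  -- cluster point machinery
  have getcluster : ∀ v : ℕ → E, (∀ i, v i ∈ K) → ∃ b ∈ K,
      MapClusterPt (toWeakSpace ℝ E b) atTop (fun i => toWeakSpace ℝ E (v i)) := by
    intro v hv
    have hmap : Filter.map (fun i => toWeakSpace ℝ E (v i)) atTop ≤ 𝓟 (toWeakSpace ℝ E '' K) := by
      rw [le_principal_iff, mem_map]
      exact Eventually.of_forall fun i => ⟨v i, hv i, rfl⟩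
    obtain ⟨b', hb', hcl⟩ := hKc.exists_mapClusterPt hmap
    obtain ⟨b, hbK, rfl⟩ := hb'
    exact ⟨b, hbK, hcl⟩
  have push : ∀ (b : E) (v : ℕ → E),
      MapClusterPt (toWeakSpace ℝ E b) atTop (fun i => toWeakSpace ℝ E (v i)) →
      ∀ f : E →L[ℝ] ℝ, MapClusterPt (f b) atTop fun i => f (v i) := by
    intro b v hcl f
    have hcont : Continuous fun w : WeakSpace ℝ E => (topDualPairing ℝ E).flip w f :=
      WeakBilin.eval_continuous _ f
    have := hcl.continuousAt_comp hcont.continuousAt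
    convert this using 1
    rfl
    rfl
  have evalcl : ∀ (b : E) (v : ℕ → E),
      MapClusterPt (toWeakSpace ℝ E b) atTop (fun i => toWeakSpace ℝ E (v i)) →
      ∀ (f : E →L[ℝ] ℝ) (C : Set ℝ), IsClosed C → (∀ i, f (v i) ∈ C) → f b ∈ C := by
    intro b v hcl f C hC hmem
    have h2 := push b v hcl f
    have hle : Filter.map (fun i => f (v i)) atTop ≤ 𝓟 C := by
      rw [le_principal_iff, mem_map]
      exact Eventually.of_forall hmem
    have : ClusterPt (f b) (𝓟 C) := h2.clusterPt.mono hle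
    rw [← hC.closure_eq]
    exact mem_closure_iff_clusterPt.mpr this
  have evallim : ∀ (b : E) (v : ℕ → E),
      MapClusterPt (toWeakSpace ℝ E b) atTop (fun i => toWeakSpace ℝ E (v i)) →
      ∀ (f : E →L[ℝ] ℝ) (t : ℝ), Tendsto (fun i => f (v i)) atTop (𝓝 t) → f b = t := by
    intro b v hcl f t ht
    have h2 := push b v hcl f
    have hne : (𝓝 (f b) ⊓ 𝓝 t).NeBot := by
      have : 𝓝 (f b) ⊓ Filter.map (fun i => f (v i)) atTop ≤ 𝓝 (f b) ⊓ 𝓝 t :=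
        inf_le_inf_left _ ht
      exact h2.clusterPt.neBot.mono this
    exact eq_of_nhds_neBot hne
  have memcl : ∀ (b : E) (v : ℕ → E),
      MapClusterPt (toWeakSpace ℝ E b) atTop (fun i => toWeakSpace ℝ E (v i)) →
      ∀ s : Set E, Convex ℝ s → IsClosed s → (∀ i, v i ∈ s) → b ∈ s := by
    intro b v hcl s hconv hclosed hmem
    have himg : IsClosed (toWeakSpace ℝ E '' s) := by
      have h1 : toWeakSpace ℝ E '' closure s = closure (toWeakSpace ℝ E '' s) :=
        hconv.toWeakSpace_closure (𝕜 := ℝ)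
      rw [hclosed.closure_eq] at h1
      rw [h1]
      exact isClosed_closure
    have hle : Filter.map (fun i => toWeakSpace ℝ E (v i)) atTop ≤ 𝓟 (toWeakSpace ℝ E '' s) := by
      rw [le_principal_iff, mem_map]
      exact Eventually.of_forall fun i => ⟨v i, hmem i, rfl⟩
    have hclp : ClusterPt (toWeakSpace ℝ E b) (𝓟 (toWeakSpace ℝ E '' s)) :=
      hcl.clusterPt.mono hle
    have hmem2 : toWeakSpace ℝ E b ∈ toWeakSpace ℝ E '' s := by
      rw [← himg.closure_eq]
      exact mem_closure_iff_clusterPt.mpr hclp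
    obtain ⟨z, hz, hzb⟩ := hmem2
    rwa [← (toWeakSpace ℝ E).injective hzb]
  have hxZ : ∀ j, x j ∈ (Z : Set E) :=
    fun j => (Submodule.le_topologicalClosure _) (Submodule.subset_span ⟨j, rfl⟩)
  -- the cluster point of the diagonal subsequence
  obtain ⟨a0, ha0K, hacl⟩ := getcluster (fun j => x (φ j)) (fun j => hx (φ j))
  have haZ : a0 ∈ (Z : Set E) :=
    memcl _ _ hacl Z Z.convex (Submodule.isClosed_topologicalClosure _) fun i => hxZ (φ i)
  have haB : a0 ∈ closedBall (0 : E) 1 :=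
    memcl _ _ hacl _ (convex_closedBall _ _) Metric.isClosed_closedBall fun i => hKb (hx (φ i))
  have hFa : ∀ k, F k a0 = L k := fun k => evallim _ _ hacl (F k) (L k) (hptwise k)
  refine ⟨φ, hφ, a0, mem_closedBall_zero_iff.mp haB, ?_⟩
  intro f
  by_contra hnot
  rw [Metric.tendsto_atTop] at hnot
  push_neg at hnot
  obtain ⟨ε, hε, hfreq⟩ := hnot
  have hfreq' : ∃ᶠ n in atTop, ε ≤ dist (f (x (φ n))) (f a0) := by
    rw [frequently_atTop]
    intro N
    obtain ⟨n, hn1, hn2⟩ := hfreq N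
    exact ⟨n, hn1, hn2⟩
  obtain ⟨ψ, hψ, hψ2⟩ := Filter.extraction_of_frequently_atTop hfreq'
  obtain ⟨b, hbK, hbcl⟩ := getcluster (fun i => x (φ (ψ i))) (fun i => hx (φ (ψ i)))
  have hbZ : b ∈ (Z : Set E) :=
    memcl _ _ hbcl Z Z.convex (Submodule.isClosed_topologicalClosure _) fun i => hxZ (φ (ψ i))
  have hFb : ∀ k, F k b = L k := fun k =>
    evallim _ _ hbcl (F k) (L k) ((hptwise k).comp hψ.tendsto_atTop)
  have hfb : f b ∈ {t : ℝ | ε ≤ dist t (f a0)} := by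
    apply evalcl b _ hbcl f _ ?_ hψ2
    exact isClosed_le continuous_const (continuous_id.dist continuous_const)
  have hba : b ≠ a0 := by
    intro h
    rw [h] at hfb
    simp only [Set.mem_setOf_eq, dist_self] at hfb
    linarith
  obtain ⟨k, hk⟩ := hsep (b - a0) (Z.sub_mem hbZ haZ) (sub_ne_zero.mpr hba)
  apply hk
  rw [map_sub, hFb k, hFa k, sub_self]

lemma alphaQ_le_two_betaQ {g : ℕ → E →L[ℝ] ℝ} (hg : ∀ n, ‖g n‖ ≤ 1)
    (hgn : WeakStarNull E g) : alphaQ g ≤ 2 * betaQ g := by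
  classical
  apply csSup_le ⟨0, alphaQ_zero_mem g⟩
  rintro - ⟨K, hKb, hKc, rfl⟩
  set S : ℕ → ℝ := fun n => sSup ((fun x => |g n x|) '' K) with hSdef
  rcases K.eq_empty_or_nonempty with rfl | hKne
  · have : S = fun _ => 0 := by
      funext n
      simp [hSdef, Real.sSup_empty]
    rw [this, limsup_const]
    linarith [betaQ_nonneg hg]
  have hS0 : ∀ n, 0 ≤ S n := fun n => sSup_abs_image_nonneg (hg n) hKb
  have hS1 : ∀ n, S n ≤ 1 := fun n => sSup_abs_image_le (hg n) hKb
  -- reduce to an epsilon of room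
  by_contra hcon
  push_neg at hcon
  set r := limsup S atTop with hrdef
  set ε := (r - 2 * betaQ g) / 2 with hεdef
  have hε : 0 < ε := by simp [hεdef]; linarith
  have key : (r - ε) / 2 ≤ betaQ g → False := by
    intro hkey
    have : r ≤ 2 * betaQ g + ε := by linarith
    simp only [hεdef] at this
    linarith
  apply key
  -- frequently the sup is large
  have hfr : ∃ᶠ n in atTop, r - ε / 2 < S n := by
    apply Filter.frequently_lt_of_lt_limsup
    · exact Filter.IsBoundedUnder.isCoboundedUnder_le
        ⟨0, eventually_map.mpr (Eventually.of_forall hS0)⟩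
    · rw [← hrdef]; linarith
  have hfr2 : ∃ᶠ n in atTop, ∃ x ∈ K, r - ε / 2 < |g n x| := by
    apply hfr.mono
    intro n hn
    obtain ⟨t, ht, htt⟩ := exists_lt_of_lt_csSup (hKne.image _) hn
    obtain ⟨z, hz, rfl⟩ := ht
    exact ⟨z, hz, htt⟩
  obtain ⟨η, hη, hη2⟩ := Filter.extraction_of_frequently_atTop hfr2
  choose xs hxs1 hxs2 using hη2
  obtain ⟨ψ, hψ, a, ha1, ha2⟩ := weak_seq_subseq hKc hKb hxs1
  set θ : ℕ → ℕ := fun i => η (ψ i) with hθdef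
  have hθ : StrictMono θ := hη.comp hψ
  have hga : Tendsto (fun i => g (θ i) a) atTop (𝓝 0) := (hgn a).comp hθ.tendsto_atTop
  set v : ℕ → E := fun i => xs (ψ i) with hvdef
  have hvb : ∀ i, ‖v i‖ ≤ 1 := fun i => mem_closedBall_zero_iff.mp (hKb (hxs1 (ψ i)))
  set yseq : ℕ → E := fun i => (2 : ℝ)⁻¹ • (v i - a) with hydef
  have hyb : ∀ i, ‖yseq i‖ ≤ 1 := by
    intro i
    have h1 : ‖v i - a‖ ≤ 2 := le_trans (norm_sub_le _ _) (by linarith [hvb i])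
    have h2 : ‖yseq i‖ = 2⁻¹ * ‖v i - a‖ := by
      rw [hydef]
      simp only [norm_smul]
      norm_num
    rw [h2]
    linarith [norm_nonneg (v i - a)]
  set y' : ℕ → E := fun n => if h : ∃ i, θ i = n then yseq h.choose else 0 with hy'def
  have hy'θ : ∀ i, y' (θ i) = yseq i := by
    intro i
    have h : ∃ i', θ i' = θ i := ⟨i, rfl⟩
    simp only [hy'def, dif_pos h]
    congr 1
    exact hθ.injective h.choose_spec
  have hy'b : ∀ n, y' n ∈ closedBall (0 : E) 1 := by
    intro n
    rw [mem_closedBall_zero_iff, hy'def]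
    by_cases h : ∃ i, θ i = n
    · simp only [dif_pos h]
      exact hyb _
    · simp [dif_neg h]
  have hf0 : ∀ f : E →L[ℝ] ℝ, Tendsto (fun i => f (yseq i)) atTop (𝓝 0) := by
    intro f
    have h2 : Tendsto (fun i => (2 : ℝ)⁻¹ * (f (v i) - f a)) atTop
        (𝓝 ((2 : ℝ)⁻¹ * (f a - f a))) := ((ha2 f).sub tendsto_const_nhds).const_mul _
    have h3 : ((2 : ℝ)⁻¹ * (f a - f a)) = 0 := by ring
    rw [h3] at h2
    convert h2 using 1
    funext i
    simp [hydef, map_smul, map_sub, smul_eq_mul]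
  have hy'null : WeaklyNull E y' := by
    intro f
    rw [Metric.tendsto_atTop]
    intro δ hδ
    obtain ⟨I, hI⟩ := Metric.tendsto_atTop.mp (hf0 f) δ hδ
    refine ⟨θ I, fun n hn => ?_⟩
    by_cases h : ∃ i, θ i = n
    · have hcs := h.choose_spec
      have hIle : I ≤ h.choose := by
        by_contra hlt
        push_neg at hlt
        have := hθ hlt
        omega
      simp only [hy'def, dif_pos h]
      exact hI _ hIle
    · simp only [hy'def, dif_neg h]
      simpa using hδ
  have hmem : limsup (fun n => |g n (y' n)|) atTop ∈
      { s | ∃ z : ℕ → E, (∀ n, z n ∈ closedBall (0 : E) 1) ∧ WeaklyNull E z ∧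
        s = limsup (fun n => |g n (z n)|) atTop } := ⟨y', hy'b, hy'null, rfl⟩
  have hle : limsup (fun n => |g n (y' n)|) atTop ≤ betaQ g := le_csSup (betaQ_bddAbove hg) hmem
  have hev : ∀ᶠ i in atTop, (r - ε) / 2 ≤ |g (θ i) (y' (θ i))| := by
    have hsm : ∀ᶠ i in atTop, |g (θ i) a| < ε / 2 := by
      obtain ⟨I, hI⟩ := Metric.tendsto_atTop.mp hga (ε / 2) (by positivity)
      rw [eventually_atTop]
      refine ⟨I, fun i hi => ?_⟩
      have := hI i hi
      rwa [Real.dist_eq, sub_zero] at this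
    apply hsm.mono
    intro i hi
    rw [hy'θ i]
    have h1 : r - ε / 2 < |g (θ i) (v i)| := hxs2 (ψ i)
    have h2 : |g (θ i) (yseq i)| = |g (θ i) (v i) - g (θ i) a| / 2 := by
      have : g (θ i) (yseq i) = (2 : ℝ)⁻¹ * (g (θ i) (v i) - g (θ i) a) := by
        simp [hydef, map_smul, map_sub, smul_eq_mul]
      rw [this, abs_mul]
      have h4 : |(2 : ℝ)⁻¹| = 2⁻¹ := by norm_num
      rw [h4]
      ring
    rw [h2]
    have h3 := abs_sub_abs_le_abs_sub (g (θ i) (v i)) (g (θ i) a)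
    linarith
  have hfreqn : ∃ᶠ n in atTop, (r - ε) / 2 ≤ |g n (y' n)| :=
    hθ.tendsto_atTop.frequently hev.frequently
  have hfin : (r - ε) / 2 ≤ limsup (fun n => |g n (y' n)|) atTop :=
    Filter.le_limsup_of_frequently_le hfreqn
      ⟨1, eventually_map.mpr (Eventually.of_forall fun n =>
        abs_apply_le_one (hg n) (mem_closedBall_zero_iff.mp (hy'b n)))⟩
  linarith

end Aux

theorem stmt6 {X : Type*} [NormedAddCommGroup X] [NormedSpace ℝ X] [CompleteSpace X] :
    K2 X ≤ K1 X ∧ K1 X ≤ 2 * K2 X := by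
  -- notation for the inner sets
  set A : (ℕ → X →L[ℝ] ℝ) → Set ℝ :=
    fun f => { s | ∃ g, IsConvexBlock f g ∧ s = alphaQ g } with hA
  set B : (ℕ → X →L[ℝ] ℝ) → Set ℝ :=
    fun f => { s | ∃ g, IsConvexBlock f g ∧ s = betaQ g } with hB
  have hAne : ∀ f, (A f).Nonempty := fun f => ⟨alphaQ f, f, cb_self f, rfl⟩
  have hBne : ∀ f, (B f).Nonempty := fun f => ⟨betaQ f, f, cb_self f, rfl⟩
  have hAbdd : ∀ f : ℕ → X →L[ℝ] ℝ, (∀ n, ‖f n‖ ≤ 1) → BddBelow (A f) := by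
    rintro f hf1
    refine ⟨0, ?_⟩
    rintro - ⟨g, hg, rfl⟩
    exact alphaQ_nonneg_s6 (blk_norm_le hf1 hg)
  have hBbdd : ∀ f : ℕ → X →L[ℝ] ℝ, (∀ n, ‖f n‖ ≤ 1) → BddBelow (B f) := by
    rintro f hf1
    refine ⟨0, ?_⟩
    rintro - ⟨g, hg, rfl⟩
    exact betaQ_nonneg (blk_norm_le hf1 hg)
  -- the outer sets
  have hzero : ∀ n : ℕ, ‖(0 : X →L[ℝ] ℝ)‖ ≤ 1 := fun n => by simp
  have hzeronull : WeakStarNull X (fun _ => (0 : X →L[ℝ] ℝ)) := fun x => by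
    simpa using tendsto_const_nhds
  have hK1ne : { r | ∃ f : ℕ → X →L[ℝ] ℝ, (∀ n, ‖f n‖ ≤ 1) ∧ WeakStarNull X f ∧
      r = sInf (A f) }.Nonempty :=
    ⟨_, (fun _ => 0), hzero, hzeronull, rfl⟩
  have hK2ne : { r | ∃ f : ℕ → X →L[ℝ] ℝ, (∀ n, ‖f n‖ ≤ 1) ∧ WeakStarNull X f ∧
      r = sInf (B f) }.Nonempty :=
    ⟨_, (fun _ => 0), hzero, hzeronull, rfl⟩
  have hK1bdd : BddAbove { r | ∃ f : ℕ → X →L[ℝ] ℝ, (∀ n, ‖f n‖ ≤ 1) ∧ WeakStarNull X f ∧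
      r = sInf (A f) } := by
    refine ⟨1, ?_⟩
    rintro - ⟨f, hf1, hf2, rfl⟩
    exact le_trans (csInf_le (hAbdd f hf1) ⟨f, cb_self f, rfl⟩) (alphaQ_le_one_s6 hf1)
  have hK2bdd : BddAbove { r | ∃ f : ℕ → X →L[ℝ] ℝ, (∀ n, ‖f n‖ ≤ 1) ∧ WeakStarNull X f ∧
      r = sInf (B f) } := by
    refine ⟨1, ?_⟩
    rintro - ⟨f, hf1, hf2, rfl⟩
    exact le_trans (csInf_le (hBbdd f hf1) ⟨f, cb_self f, rfl⟩) (betaQ_le_one hf1)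
  constructor
  · -- K2 ≤ K1
    apply csSup_le hK2ne
    rintro - ⟨f, hf1, hf2, rfl⟩
    have h1 : sInf (B f) ≤ sInf (A f) := by
      apply le_csInf (hAne f)
      rintro - ⟨g, hg, rfl⟩
      exact le_trans (csInf_le (hBbdd f hf1) ⟨g, hg, rfl⟩)
        (betaQ_le_alphaQ (blk_norm_le hf1 hg))
    exact le_trans h1 (le_csSup hK1bdd ⟨f, hf1, hf2, rfl⟩)
  · -- K1 ≤ 2 * K2
    apply csSup_le hK1ne
    rintro - ⟨f, hf1, hf2, rfl⟩
    have h1 : sInf (A f) ≤ 2 * sInf (B f) := by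
      have h2 : ∀ s ∈ B f, sInf (A f) ≤ 2 * s := by
        rintro - ⟨g, hg, rfl⟩
        calc sInf (A f) ≤ alphaQ g := csInf_le (hAbdd f hf1) ⟨g, hg, rfl⟩
          _ ≤ 2 * betaQ g := alphaQ_le_two_betaQ (blk_norm_le hf1 hg)
              (blk_wstar_null hf2 hg)
      have h3 : sInf (A f) / 2 ≤ sInf (B f) := by
        apply le_csInf (hBne f)
        intro s hs
        linarith [h2 s hs]
      linarith
    have h4 : sInf (B f) ≤ K2 X := le_csSup hK2bdd ⟨f, hf1, hf2, rfl⟩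
    linarith
end
end

section
/- For any Banach space X, K₁(X) ≤ K₃(X) ≤ 4K₁(X), where K₃(X) = sup over weak* Cauchy sequences (f_n) in B_{X*} of inf over convex block subsequences (g_n) of ca_{ρ*}((g_n)). -/
open Filter Topology Metric Set NormedSpace

noncomputable section

variable (X : Type*) [NormedAddCommGroup X] [NormedSpace ℝ X]

variable {X}

variable (X)

section Aux

variable {X : Type*} [NormedAddCommGroup X] [NormedSpace ℝ X]

private lemma aux_convex_eval_ball (x : X) (c ε : ℝ) :
    Convex ℝ {φ : X →L[ℝ] ℝ | |φ x - c| ≤ ε} := by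
  intro φ hφ ψ hψ a b ha hb hab
  simp only [Set.mem_setOf_eq] at *
  have h1 : (a • φ + b • ψ) x - c = a * (φ x - c) + b * (ψ x - c) := by
    simp only [ContinuousLinearMap.add_apply, ContinuousLinearMap.coe_smul',
      Pi.smul_apply, smul_eq_mul]
    linear_combination c * hab
  rw [h1]
  calc |a * (φ x - c) + b * (ψ x - c)| ≤ |a * (φ x - c)| + |b * (ψ x - c)| := abs_add_le _ _
    _ = a * |φ x - c| + b * |ψ x - c| := by
        rw [abs_mul, abs_mul, abs_of_nonneg ha, abs_of_nonneg hb]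
    _ ≤ a * ε + b * ε := by
        have h2 := mul_le_mul_of_nonneg_left hφ ha
        have h3 := mul_le_mul_of_nonneg_left hψ hb
        linarith
    _ = ε := by linear_combination ε * hab

private lemma aux_eval_mem_of_convexHull {s : Set (X →L[ℝ] ℝ)} {x : X} {c ε : ℝ}
    (hs : ∀ φ ∈ s, |φ x - c| ≤ ε) {g : X →L[ℝ] ℝ} (hg : g ∈ convexHull ℝ s) :
    |g x - c| ≤ ε :=
  convexHull_min hs (aux_convex_eval_ball x c ε) hg

private lemma aux_cbs_norm_le {f g : ℕ → X →L[ℝ] ℝ} (h : IsConvexBlock f g)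
    (hf : ∀ n, ‖f n‖ ≤ 1) : ∀ n, ‖g n‖ ≤ 1 := by
  obtain ⟨k, -, -, hmem⟩ := h
  intro n
  have hmem2 : g n ∈ closedBall (0 : X →L[ℝ] ℝ) 1 := by
    refine convexHull_min ?_ (convex_closedBall _ _) (hmem n)
    rintro φ ⟨m, -, rfl⟩
    simpa [mem_closedBall_zero_iff] using hf m
  simpa [mem_closedBall_zero_iff] using hmem2

private lemma aux_cbs_tendsto {f g : ℕ → X →L[ℝ] ℝ} (h : IsConvexBlock f g) (x : X) {c : ℝ}
    (hf : Tendsto (fun n => f n x) atTop (𝓝 c)) :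
    Tendsto (fun n => g n x) atTop (𝓝 c) := by
  obtain ⟨k, -, hk, hmem⟩ := h
  rw [Metric.tendsto_atTop] at hf ⊢
  intro ε hε
  obtain ⟨N, hN⟩ := hf (ε / 2) (by linarith)
  refine ⟨N, fun n hn => ?_⟩
  have hle : |g n x - c| ≤ ε / 2 := by
    refine aux_eval_mem_of_convexHull ?_ (hmem n)
    rintro φ ⟨m, hm, rfl⟩
    have hNm : N ≤ m := le_trans (hn.trans hk.le_apply) hm.1
    have := hN m hNm
    rw [Real.dist_eq] at this
    linarith
  rw [Real.dist_eq]
  linarith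

private lemma aux_cbs_self (f : ℕ → X →L[ℝ] ℝ) : IsConvexBlock f f :=
  ⟨id, rfl, strictMono_id, fun n =>
    subset_convexHull ℝ _ ⟨n, ⟨le_refl n, Nat.lt_succ_self n⟩, rfl⟩⟩

private lemma aux_abs_eval_le {g : X →L[ℝ] ℝ} (hg : ‖g‖ ≤ 1) {x : X}
    (hx : x ∈ closedBall (0 : X) 1) : |g x| ≤ 1 := by
  rw [mem_closedBall_zero_iff] at hx
  have h1 := g.le_opNorm x
  rw [Real.norm_eq_abs] at h1
  nlinarith [norm_nonneg g, norm_nonneg x, abs_nonneg (g x)]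

private lemma aux_bset_nonneg (g : ℕ → X →L[ℝ] ℝ) (K : Set X) (n : ℕ) :
    0 ≤ sSup { t | ∃ k ≥ n, ∃ l ≥ n, ∃ x ∈ K, t = |(g k - g l) x| } := by
  refine Real.sSup_nonneg ?_
  rintro t ⟨k, -, l, -, x, -, rfl⟩
  positivity

private lemma aux_aK_nonneg (g : ℕ → X →L[ℝ] ℝ) (K : Set X) (n : ℕ) :
    0 ≤ sSup ((fun x => |g n x|) '' K) := by
  refine Real.sSup_nonneg ?_
  rintro t ⟨x, -, rfl⟩
  positivity

private lemma aux_aK_le_one {g : ℕ → X →L[ℝ] ℝ} (hg : ∀ n, ‖g n‖ ≤ 1) {K : Set X}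
    (hK : K ⊆ closedBall 0 1) (n : ℕ) : sSup ((fun x => |g n x|) '' K) ≤ 1 := by
  refine Real.sSup_le ?_ zero_le_one
  rintro t ⟨x, hx, rfl⟩
  exact aux_abs_eval_le (hg n) (hK hx)

private lemma aux_aK_bddAbove {g : ℕ → X →L[ℝ] ℝ} (hg : ∀ n, ‖g n‖ ≤ 1) {K : Set X}
    (hK : K ⊆ closedBall 0 1) (n : ℕ) : BddAbove ((fun x => |g n x|) '' K) := by
  refine ⟨1, ?_⟩
  rintro t ⟨x, hx, rfl⟩
  exact aux_abs_eval_le (hg n) (hK hx)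

private lemma aux_cobounded {u : ℕ → ℝ} (hu : ∀ n, 0 ≤ u n) :
    Filter.IsCoboundedUnder (· ≤ ·) atTop u :=
  (Filter.isBoundedUnder_of ⟨0, hu⟩).isCoboundedUnder_le

private lemma aux_limsup_aK_le_one {g : ℕ → X →L[ℝ] ℝ} (hg : ∀ n, ‖g n‖ ≤ 1) {K : Set X}
    (hK : K ⊆ closedBall 0 1) :
    limsup (fun n => sSup ((fun x => |g n x|) '' K)) atTop ≤ 1 := by
  refine Filter.limsup_le_of_le ?_ ?_
  · exact aux_cobounded (fun n => aux_aK_nonneg g K n)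
  · exact Eventually.of_forall fun n => aux_aK_le_one hg hK n

private lemma aux_limsup_nonneg {u : ℕ → ℝ} (hu : ∀ n, 0 ≤ u n) : 0 ≤ limsup u atTop := by
  rw [Filter.limsup_eq]
  rcases Set.eq_empty_or_nonempty {a : ℝ | ∀ᶠ n in atTop, u n ≤ a} with h | h
  · rw [h, Real.sInf_empty]
  · refine le_csInf h ?_
    intro c hc
    obtain ⟨N, hN⟩ := eventually_atTop.1 hc
    exact le_trans (hu N) (hN N le_rfl)

private lemma aux_alphaQ_nonneg (g : ℕ → X →L[ℝ] ℝ) : 0 ≤ alphaQ g := by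
  refine Real.sSup_nonneg ?_
  rintro r ⟨K, hK, hKc, rfl⟩
  exact aux_limsup_nonneg (fun n => aux_aK_nonneg g K n)

private lemma aux_alphaQ_le_one {g : ℕ → X →L[ℝ] ℝ} (hg : ∀ n, ‖g n‖ ≤ 1) : alphaQ g ≤ 1 := by
  refine Real.sSup_le ?_ zero_le_one
  rintro r ⟨K, hK, -, rfl⟩
  exact aux_limsup_aK_le_one hg hK

private lemma aux_alpha_bddAbove {g : ℕ → X →L[ℝ] ℝ} (hg : ∀ n, ‖g n‖ ≤ 1) :
    BddAbove { r | ∃ K : Set X, K ⊆ closedBall 0 1 ∧ WeaklyCompact X K ∧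
      r = limsup (fun n => sSup ((fun x => |g n x|) '' K)) atTop } := by
  refine ⟨1, ?_⟩
  rintro r ⟨K, hK, -, rfl⟩
  exact aux_limsup_aK_le_one hg hK

private lemma aux_bset_bddAbove {g : ℕ → X →L[ℝ] ℝ} (hg : ∀ n, ‖g n‖ ≤ 1) {K : Set X}
    (hK : K ⊆ closedBall 0 1) (n : ℕ) :
    BddAbove { t | ∃ k ≥ n, ∃ l ≥ n, ∃ x ∈ K, t = |(g k - g l) x| } := by
  refine ⟨2, ?_⟩
  rintro t ⟨k, -, l, -, x, hx, rfl⟩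
  have hx1 : ‖x‖ ≤ 1 := by have := hK hx; rwa [mem_closedBall_zero_iff] at this
  have h1 := (g k - g l).le_opNorm x
  rw [Real.norm_eq_abs] at h1
  have h2 : ‖g k - g l‖ ≤ 2 := (norm_sub_le _ _).trans (by linarith [hg k, hg l])
  nlinarith [norm_nonneg (g k - g l), norm_nonneg x]

private lemma aux_caRho_nonneg (g : ℕ → X →L[ℝ] ℝ) : 0 ≤ caRho g := by
  refine Real.sSup_nonneg ?_
  rintro r ⟨K, hK, hKc, rfl⟩
  exact Real.iInf_nonneg (fun n => aux_bset_nonneg g K n)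

private lemma aux_caRho_le_two {g : ℕ → X →L[ℝ] ℝ} (hg : ∀ n, ‖g n‖ ≤ 1) : caRho g ≤ 2 := by
  refine Real.sSup_le ?_ (by norm_num)
  rintro r ⟨K, hK, -, rfl⟩
  refine le_trans (ciInf_le ⟨0, ?_⟩ 0) ?_
  · rintro t ⟨n, rfl⟩; exact aux_bset_nonneg g K n
  · refine Real.sSup_le ?_ (by norm_num)
    rintro t ⟨k, -, l, -, x, hx, rfl⟩
    have hx1 : ‖x‖ ≤ 1 := by have := hK hx; rwa [mem_closedBall_zero_iff] at this
    have h1 := (g k - g l).le_opNorm x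
    rw [Real.norm_eq_abs] at h1
    have h2 : ‖g k - g l‖ ≤ 2 := (norm_sub_le _ _).trans (by linarith [hg k, hg l])
    nlinarith [norm_nonneg (g k - g l), norm_nonneg x]

private lemma aux_alphaQ_le_caRho {g : ℕ → X →L[ℝ] ℝ} (hg : ∀ n, ‖g n‖ ≤ 1)
    (hnull : ∀ x, Tendsto (fun n => g n x) atTop (𝓝 0)) :
    alphaQ g ≤ caRho g := by
  refine Real.sSup_le ?_ (aux_caRho_nonneg g)
  rintro r ⟨K, hK, hKc, rfl⟩
  set b : ℕ → ℝ := fun n => sSup { t | ∃ k ≥ n, ∃ l ≥ n, ∃ x ∈ K, t = |(g k - g l) x| }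
    with hbdef
  have key : ∀ n, ∀ k, n ≤ k → sSup ((fun x => |g k x|) '' K) ≤ b n := by
    intro n k hk
    refine Real.sSup_le ?_ (aux_bset_nonneg g K n)
    rintro t ⟨x, hx, rfl⟩
    have htend : Tendsto (fun l => |(g k - g l) x|) atTop (𝓝 |g k x|) := by
      have h1 : Tendsto (fun l => g k x - g l x) atTop (𝓝 (g k x - 0)) :=
        tendsto_const_nhds.sub (hnull x)
    -- |(g k - g l) x| = |g k x - g l x|
      simpa [ContinuousLinearMap.sub_apply] using h1.abs
    refine le_of_tendsto htend (eventually_atTop.2 ⟨n, fun l hl => ?_⟩)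
    exact le_csSup (aux_bset_bddAbove hg hK n) ⟨k, hk, l, hl, x, hx, rfl⟩
  have hls : ∀ n, limsup (fun k => sSup ((fun x => |g k x|) '' K)) atTop ≤ b n := by
    intro n
    refine Filter.limsup_le_of_le ?_ ?_
    · exact aux_cobounded (fun k => aux_aK_nonneg g K k)
    · exact eventually_atTop.2 ⟨n, fun k hk => key n k hk⟩
  have h2 : limsup (fun k => sSup ((fun x => |g k x|) '' K)) atTop ≤ ⨅ n, b n :=
    le_ciInf hls
  refine h2.trans ?_
  refine le_csSup ?_ ⟨K, hK, hKc, rfl⟩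
  refine ⟨2, ?_⟩
  rintro r ⟨K', hK', -, rfl⟩
  refine le_trans (ciInf_le ⟨0, ?_⟩ 0) ?_
  · rintro t ⟨n, rfl⟩; exact aux_bset_nonneg g K' n
  · refine Real.sSup_le ?_ (by norm_num)
    rintro t ⟨k, -, l, -, x, hx, rfl⟩
    have hx1 : ‖x‖ ≤ 1 := by have := hK' hx; rwa [mem_closedBall_zero_iff] at this
    have h1 := (g k - g l).le_opNorm x
    rw [Real.norm_eq_abs] at h1
    have h3 : ‖g k - g l‖ ≤ 2 := (norm_sub_le _ _).trans (by linarith [hg k, hg l])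
    nlinarith [norm_nonneg (g k - g l), norm_nonneg x]

private lemma aux_mem_convexHull_affine {E : Type*} [AddCommGroup E] [Module ℝ E]
    (c : ℝ) (v : E) {s : Set E} {y : E} (hy : y ∈ convexHull ℝ s) :
    c • y + v ∈ convexHull ℝ ((fun z => c • z + v) '' s) := by
  have h2 : Convex ℝ {z : E | c • z + v ∈ convexHull ℝ ((fun z => c • z + v) '' s)} := by
    intro z₁ h₁ z₂ h₂ a b ha hb hab
    simp only [Set.mem_setOf_eq] at *
    have heq : c • (a • z₁ + b • z₂) + v = a • (c • z₁ + v) + b • (c • z₂ + v) := by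
      obtain rfl : b = 1 - a := by linarith
      module
    rw [heq]
    exact (convex_convexHull ℝ _) h₁ h₂ ha hb hab
  refine convexHull_min ?_ h2 hy
  intro z hz
  exact subset_convexHull ℝ _ ⟨z, hz, rfl⟩

private lemma aux_caRho_le_four_alpha {g g' : ℕ → X →L[ℝ] ℝ} {F : X →L[ℝ] ℝ}
    (hgg : ∀ n, g n = (2 : ℝ) • g' n + F) (hg' : ∀ n, ‖g' n‖ ≤ 1) :
    caRho g ≤ 4 * alphaQ g' := by
  refine Real.sSup_le ?_ (by linarith [aux_alphaQ_nonneg g'])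
  rintro r ⟨K, hK, hKc, rfl⟩
  set a : ℕ → ℝ := fun m => sSup ((fun x => |g' m x|) '' K) with ha
  set b : ℕ → ℝ := fun n => sSup { t | ∃ k ≥ n, ∃ l ≥ n, ∃ x ∈ K, t = |(g k - g l) x| }
    with hbdef
  have hstep : ∀ c : ℝ, (∀ᶠ m in atTop, a m ≤ c) → (⨅ n, b n) ≤ 4 * c := by
    intro c hc
    obtain ⟨N, hN⟩ := eventually_atTop.1 hc
    have hc0 : 0 ≤ c := le_trans (aux_aK_nonneg g' K N) (hN N le_rfl)
    have hbN : b N ≤ 4 * c := by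
      refine Real.sSup_le ?_ (by linarith)
      rintro t ⟨k, hk, l, hl, x, hx, rfl⟩
      have h1 : (g k - g l) x = 2 * (g' k x - g' l x) := by
        rw [hgg k, hgg l]
        simp only [ContinuousLinearMap.sub_apply, ContinuousLinearMap.add_apply,
          ContinuousLinearMap.coe_smul', Pi.smul_apply, smul_eq_mul]
        ring
      have h2 : |g' k x| ≤ a k := le_csSup (aux_aK_bddAbove hg' hK k) ⟨x, hx, rfl⟩
      have h3 : |g' l x| ≤ a l := le_csSup (aux_aK_bddAbove hg' hK l) ⟨x, hx, rfl⟩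
      have h4 : |(g k - g l) x| ≤ 2 * (|g' k x| + |g' l x|) := by
        rw [h1, abs_mul]
        have := abs_sub_abs_le_abs_sub (g' k x) (g' l x)
        have h5 : |g' k x - g' l x| ≤ |g' k x| + |g' l x| := abs_sub _ _
        rw [abs_two]
        linarith
      linarith [hN k hk, hN l hl]
    refine le_trans (ciInf_le ⟨0, ?_⟩ N) hbN
    rintro t ⟨n, rfl⟩; exact aux_bset_nonneg g K n
  have hlim : (⨅ n, b n) ≤ 4 * limsup a atTop := by
    rw [Filter.limsup_eq]
    have hne : {c : ℝ | ∀ᶠ m in atTop, a m ≤ c}.Nonempty :=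
      ⟨1, Eventually.of_forall fun m => aux_aK_le_one hg' hK m⟩
    have h6 : (⨅ n, b n) / 4 ≤ sInf {c : ℝ | ∀ᶠ m in atTop, a m ≤ c} :=
      le_csInf hne (fun c hc => by linarith [hstep c hc])
    linarith
  refine hlim.trans ?_
  have h7 : limsup a atTop ≤ alphaQ g' := le_csSup (aux_alpha_bddAbove hg') ⟨K, hK, hKc, rfl⟩
  linarith

private lemma aux_S1_bddAbove :
    BddAbove { r | ∃ f : ℕ → X →L[ℝ] ℝ, (∀ n, ‖f n‖ ≤ 1) ∧ WeakStarNull X f ∧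
      r = sInf { s | ∃ g, IsConvexBlock f g ∧ s = alphaQ g } } := by
  refine ⟨1, ?_⟩
  rintro r ⟨f, hf, -, rfl⟩
  have h1 : sInf { s | ∃ g, IsConvexBlock f g ∧ s = alphaQ g } ≤ alphaQ f := by
    refine csInf_le ⟨0, ?_⟩ ⟨f, aux_cbs_self f, rfl⟩
    rintro s ⟨g, -, rfl⟩; exact aux_alphaQ_nonneg g
  exact h1.trans (aux_alphaQ_le_one hf)

private lemma aux_S3_bddAbove :
    BddAbove { r | ∃ f : ℕ → X →L[ℝ] ℝ, (∀ n, ‖f n‖ ≤ 1) ∧ WeakStarCauchy X f ∧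
      r = sInf { s | ∃ g, IsConvexBlock f g ∧ s = caRho g } } := by
  refine ⟨2, ?_⟩
  rintro r ⟨f, hf, -, rfl⟩
  have h1 : sInf { s | ∃ g, IsConvexBlock f g ∧ s = caRho g } ≤ caRho f := by
    refine csInf_le ⟨0, ?_⟩ ⟨f, aux_cbs_self f, rfl⟩
    rintro s ⟨g, -, rfl⟩; exact aux_caRho_nonneg g
  exact h1.trans (aux_caRho_le_two hf)

private lemma aux_K1_nonneg : 0 ≤ K1 X := by
  have hmem : sInf { s | ∃ g, IsConvexBlock (fun _ : ℕ => (0 : X →L[ℝ] ℝ)) g ∧ s = alphaQ g }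
      ∈ { r | ∃ f : ℕ → X →L[ℝ] ℝ, (∀ n, ‖f n‖ ≤ 1) ∧ WeakStarNull X f ∧
        r = sInf { s | ∃ g, IsConvexBlock f g ∧ s = alphaQ g } } := by
    refine ⟨fun _ => 0, fun n => by simp, fun x => by simpa using tendsto_const_nhds, rfl⟩
  have h0 : 0 ≤ sInf { s | ∃ g, IsConvexBlock (fun _ : ℕ => (0 : X →L[ℝ] ℝ)) g ∧ s = alphaQ g } := by
    refine le_csInf ⟨alphaQ (fun _ => 0), fun _ => 0, aux_cbs_self _, rfl⟩ ?_
    rintro s ⟨g, -, rfl⟩; exact aux_alphaQ_nonneg g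
  exact h0.trans (le_csSup aux_S1_bddAbove hmem)

end Aux

theorem stmt7 {X : Type*} [NormedAddCommGroup X] [NormedSpace ℝ X] [CompleteSpace X] :
    K1 X ≤ K3 X ∧ K3 X ≤ 4 * K1 X := by
  constructor
  · -- K1 ≤ K3
    have hK3nn : 0 ≤ K3 X := by
      have hmem : sInf { s | ∃ g, IsConvexBlock (fun _ : ℕ => (0 : X →L[ℝ] ℝ)) g ∧ s = caRho g }
          ∈ { r | ∃ f : ℕ → X →L[ℝ] ℝ, (∀ n, ‖f n‖ ≤ 1) ∧ WeakStarCauchy X f ∧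
            r = sInf { s | ∃ g, IsConvexBlock f g ∧ s = caRho g } } := by
        refine ⟨fun _ => 0, fun n => by simp,
          fun x => ⟨0, by simpa using tendsto_const_nhds⟩, rfl⟩
      have h0 : 0 ≤ sInf { s | ∃ g, IsConvexBlock (fun _ : ℕ => (0 : X →L[ℝ] ℝ)) g ∧
          s = caRho g } := by
        refine le_csInf ⟨caRho (fun _ => 0), fun _ => 0, aux_cbs_self _, rfl⟩ ?_
        rintro s ⟨g, -, rfl⟩; exact aux_caRho_nonneg g
      exact h0.trans (le_csSup aux_S3_bddAbove hmem)
    refine Real.sSup_le ?_ hK3nn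
    rintro r ⟨f, hf, hfnull, rfl⟩
    have hfc : WeakStarCauchy X f := fun x => ⟨0, hfnull x⟩
    have hr' : sInf { s | ∃ g, IsConvexBlock f g ∧ s = caRho g } ≤ K3 X :=
      le_csSup aux_S3_bddAbove ⟨f, hf, hfc, rfl⟩
    refine le_trans ?_ hr'
    refine le_csInf ⟨caRho f, f, aux_cbs_self f, rfl⟩ ?_
    rintro s ⟨g, hgcbs, rfl⟩
    have h1 : sInf { s | ∃ g, IsConvexBlock f g ∧ s = alphaQ g } ≤ alphaQ g := by
      refine csInf_le ⟨0, ?_⟩ ⟨g, hgcbs, rfl⟩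
      rintro s ⟨g₀, -, rfl⟩; exact aux_alphaQ_nonneg g₀
    refine h1.trans (aux_alphaQ_le_caRho (aux_cbs_norm_le hgcbs hf) ?_)
    exact fun x => aux_cbs_tendsto hgcbs x (hfnull x)
  · -- K3 ≤ 4 K1
    refine Real.sSup_le ?_ (by linarith [aux_K1_nonneg (X := X)])
    rintro r ⟨f, hf, hfc, rfl⟩
    choose L hL using hfc
    have hadd : ∀ x y : X, L (x + y) = L x + L y := by
      intro x y
      refine tendsto_nhds_unique (hL (x + y)) ?_
      simpa [map_add] using (hL x).add (hL y)
    have hsmul : ∀ (c : ℝ) (x : X), L (c • x) = c * L x := by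
      intro c x
      refine tendsto_nhds_unique (hL (c • x)) ?_
      simpa [map_smul, smul_eq_mul, mul_comm] using (hL x).const_mul c
    have hbound : ∀ x : X, ‖L x‖ ≤ 1 * ‖x‖ := by
      intro x
      have htends : Tendsto (fun n => |f n x|) atTop (𝓝 |L x|) := (hL x).abs
      rw [Real.norm_eq_abs]
      refine le_of_tendsto htends (Eventually.of_forall fun n => ?_)
      have h1 := (f n).le_opNorm x
      rw [Real.norm_eq_abs] at h1
      nlinarith [norm_nonneg x, hf n, norm_nonneg (f n)]
    set F : X →L[ℝ] ℝ := LinearMap.mkContinuous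
      { toFun := L, map_add' := hadd, map_smul' := fun c x => by simpa using hsmul c x }
      1 hbound with hFdef
    have hF1 : ‖F‖ ≤ 1 := LinearMap.mkContinuous_norm_le _ zero_le_one hbound
    have hFx : ∀ x, F x = L x := fun x => rfl
    set h : ℕ → X →L[ℝ] ℝ := fun n => (2⁻¹ : ℝ) • (f n - F) with hhdef
    have hh1 : ∀ n, ‖h n‖ ≤ 1 := by
      intro n
      have h2 : ‖f n - F‖ ≤ 2 := (norm_sub_le _ _).trans (by linarith [hf n])
      have h3 : h n = (2⁻¹ : ℝ) • (f n - F) := by simp only [hhdef]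
      rw [h3]
      refine le_trans (ContinuousLinearMap.opNorm_smul_le (2⁻¹ : ℝ) (f n - F)) ?_
      rw [Real.norm_eq_abs, abs_of_nonneg (by norm_num : (0:ℝ) ≤ 2⁻¹)]
      linarith
    have hhnull : WeakStarNull X h := by
      intro x
      have h1 : Tendsto (fun n => (2⁻¹ : ℝ) * (f n x - F x)) atTop (𝓝 0) := by
        have h0 : Tendsto (fun n => f n x - F x) atTop (𝓝 (L x - L x)) := by
          rw [hFx]
          exact (hL x).sub tendsto_const_nhds
        rw [sub_self] at h0
        simpa using h0.const_mul (2⁻¹ : ℝ)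
      have heq : ∀ n, h n x = (2⁻¹ : ℝ) * (f n x - F x) := by
        intro n
        simp [hhdef, ContinuousLinearMap.sub_apply, smul_eq_mul]
      simpa only [heq] using h1
    have hrh : sInf { s | ∃ g, IsConvexBlock h g ∧ s = alphaQ g } ≤ K1 X :=
      le_csSup aux_S1_bddAbove ⟨h, hh1, hhnull, rfl⟩
    set rh := sInf { s | ∃ g, IsConvexBlock h g ∧ s = alphaQ g } with hrhdef
    refine le_of_forall_pos_le_add ?_
    intro ε hε
    have hε4 : (0 : ℝ) < ε / 4 := by linarith
    obtain ⟨s, ⟨g', hg'cbs, rfl⟩, hslt⟩ :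
        ∃ s ∈ { s | ∃ g, IsConvexBlock h g ∧ s = alphaQ g }, s < rh + ε / 4 := by
      refine exists_lt_of_csInf_lt ⟨alphaQ h, h, aux_cbs_self h, rfl⟩ ?_
      rw [← hrhdef]; linarith
    set g : ℕ → X →L[ℝ] ℝ := fun n => (2 : ℝ) • g' n + F with hgdef
    have hfm : ∀ m, (2 : ℝ) • h m + F = f m := by
      intro m
      have h3 : h m = (2⁻¹ : ℝ) • (f m - F) := by simp only [hhdef]
      have h4 : (2 : ℝ) * 2⁻¹ = 1 := by norm_num
      rw [h3, smul_smul, h4, one_smul, sub_add_cancel]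
    have hgcbs : IsConvexBlock f g := by
      obtain ⟨k, hk0, hkm, hmem⟩ := hg'cbs
      refine ⟨k, hk0, hkm, fun n => ?_⟩
      have h1 := aux_mem_convexHull_affine (2 : ℝ) F (hmem n)
      rw [Set.image_image] at h1
      have h2 : (fun m => (2 : ℝ) • h m + F) '' Set.Ico (k n) (k (n + 1)) =
          f '' Set.Ico (k n) (k (n + 1)) := Set.image_congr (fun m _ => hfm m)
      rw [h2] at h1
      exact h1
    have hcar : caRho g ≤ 4 * alphaQ g' :=
      aux_caRho_le_four_alpha (fun n => rfl) (aux_cbs_norm_le hg'cbs hh1)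
    have hmem2 : sInf { s | ∃ g₀, IsConvexBlock f g₀ ∧ s = caRho g₀ } ≤ caRho g := by
      refine csInf_le ⟨0, ?_⟩ ⟨g, hgcbs, rfl⟩
      rintro s ⟨g₀, -, rfl⟩; exact aux_caRho_nonneg g₀
    calc sInf { s | ∃ g₀, IsConvexBlock f g₀ ∧ s = caRho g₀ } ≤ caRho g := hmem2
      _ ≤ 4 * alphaQ g' := hcar
      _ ≤ 4 * (rh + ε / 4) := by linarith
      _ ≤ 4 * K1 X + ε := by linarith
end
end

section
/- A bounded subset A of a Banach space X is relatively weakly compact if and only if every sequence in A admits a convex block subsequence that converges in norm, and this is also equivalent to every sequence in A admitting a weakly convergent convex block subsequence. -/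
set_option maxHeartbeats 1000000


open Filter Topology Metric Set NormedSpace

noncomputable section

variable (X : Type*) [NormedAddCommGroup X] [NormedSpace ℝ X]

variable {X}

variable (X)

lemma norming_finset {Y : Type*} [NormedAddCommGroup Y] [NormedSpace ℝ Y]
    (S : Finset (StrongDual ℝ Y)) :
    ∃ G : Finset Y, (∀ f ∈ G, ‖f‖ ≤ 1) ∧
      ∀ v ∈ Submodule.span ℝ (S : Set (StrongDual ℝ Y)), ∃ f ∈ G, ‖v‖ ≤ 2 * |v f| := by
  classical
  set F : Submodule ℝ (StrongDual ℝ Y) := Submodule.span ℝ (S : Set (StrongDual ℝ Y)) with hF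
  have : FiniteDimensional ℝ F := FiniteDimensional.span_of_finite ℝ S.finite_toSet
  set Sph : Set (StrongDual ℝ Y) := ((↑) '' (sphere (0 : F) 1) : Set (StrongDual ℝ Y)) with hSph
  have hcpt : IsCompact Sph := (isCompact_sphere (0:F) 1).image continuous_subtype_val
  have hSphnorm : ∀ v ∈ Sph, ‖v‖ = 1 := by
    rintro - ⟨w, hw, rfl⟩
    exact mem_sphere_zero_iff_norm.1 hw
  have key : ∀ v : StrongDual ℝ Y, ‖v‖ = 1 → ∃ f : Y, ‖f‖ ≤ 1 ∧ 3/4 < |v f| := by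
    intro v hv
    by_contra h
    push_neg at h
    have : ‖v‖ ≤ 3/4 := by
      refine ContinuousLinearMap.opNorm_le_bound' v (by norm_num) (fun y hy => ?_)
      have hy' : ‖(‖y‖⁻¹ • y : Y)‖ ≤ 1 := by
        rw [norm_smul, norm_inv, norm_norm, inv_mul_cancel₀ hy]
      have := h _ hy'
      rw [map_smul, smul_eq_mul, abs_mul, abs_inv, abs_norm] at this
      have hypos : (0:ℝ) < ‖y‖ := lt_of_le_of_ne (norm_nonneg _) (Ne.symm hy)
      rw [Real.norm_eq_abs]
      calc |v y| = ‖y‖ * (‖y‖⁻¹ * |v y|) := by field_simp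
        _ ≤ ‖y‖ * (3/4) := mul_le_mul_of_nonneg_left this (norm_nonneg _)
        _ = 3/4 * ‖y‖ := by ring
    rw [hv] at this; norm_num at this
  choose! φ hφ1 hφ2 using key
  have hcover : Sph ⊆ ⋃ v ∈ Sph, ball v (1/4) := fun v hv => by
    simp only [mem_iUnion]
    refine ⟨v, hv, ?_⟩
    simp only [mem_ball, dist_self]; norm_num
  obtain ⟨t, htS, htfin, hcov⟩ := hcpt.elim_finite_subcover_image
    (fun v _ => isOpen_ball) hcover
  refine ⟨insert 0 (htfin.toFinset.image φ), ?_, ?_⟩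
  · intro f hf
    rcases Finset.mem_insert.1 hf with rfl | hf
    · simp
    · obtain ⟨v, hv, rfl⟩ := Finset.mem_image.1 hf
      exact hφ1 _ (hSphnorm _ (htS (htfin.mem_toFinset.1 hv)))
  · intro v hv
    rcases eq_or_ne v 0 with rfl | hv0
    · exact ⟨0, Finset.mem_insert_self _ _, by simp⟩
    have hvn : (0:ℝ) < ‖v‖ := norm_pos_iff.2 hv0
    set u : StrongDual ℝ Y := ‖v‖⁻¹ • v with hu
    have huF : u ∈ F := F.smul_mem _ hv
    have hun : ‖u‖ = 1 := by
      rw [hu, norm_smul, norm_inv, norm_norm, inv_mul_cancel₀ hvn.ne']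
    have huSph : u ∈ Sph := ⟨⟨u, huF⟩, mem_sphere_zero_iff_norm.2 hun, rfl⟩
    obtain ⟨w, hwt, hwball⟩ := by
      have := hcov huSph
      simpa only [mem_iUnion, exists_prop] using this
    have hwn : ‖w‖ = 1 := hSphnorm _ (htS hwt)
    have h34 : 3/4 < |w (φ w)| := hφ2 _ hwn
    have hfb : ‖φ w‖ ≤ 1 := hφ1 _ hwn
    have hdist : ‖u - w‖ < 1/4 := by
      rw [← dist_eq_norm]; exact mem_ball.1 hwball
    have hub : |(u - w) (φ w)| ≤ 1/4 := by
      have h := (u - w).le_opNorm (φ w)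
      rw [Real.norm_eq_abs] at h
      nlinarith [norm_nonneg (u - w)]
    have h1 : 1/2 ≤ |u (φ w)| := by
      have : w (φ w) = u (φ w) - (u - w) (φ w) := by
        simp [ContinuousLinearMap.sub_apply]
      have h2 : |w (φ w)| ≤ |u (φ w)| + |(u - w) (φ w)| := by
        rw [this]; exact (abs_sub _ _)
      linarith
    -- rescale
    refine ⟨φ w, Finset.mem_insert_of_mem (Finset.mem_image_of_mem _ (htfin.mem_toFinset.2 hwt)), ?_⟩
    have : u (φ w) = ‖v‖⁻¹ * v (φ w) := by
      rw [hu]; simp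
    rw [this, abs_mul, abs_inv, abs_norm] at h1
    have h2 : ‖v‖ * (1/2) ≤ ‖v‖ * (‖v‖⁻¹ * |v (φ w)|) :=
      mul_le_mul_of_nonneg_left h1 (norm_nonneg v)
    have h3 : ‖v‖ * (‖v‖⁻¹ * |v (φ w)|) = |v (φ w)| := by field_simp
    linarith



lemma isClosed_weak_of_convex_closed {X : Type*} [NormedAddCommGroup X] [NormedSpace ℝ X]
    {C : Set X} (hc : Convex ℝ C) (h : IsClosed C) :
    IsClosed (toWeakSpace ℝ X '' C) := by
  have := hc.toWeakSpace_closure (𝕜 := ℝ)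
  rw [h.closure_eq] at this
  rw [this]
  exact isClosed_closure

lemma pairing_injective {X : Type*} [NormedAddCommGroup X] [NormedSpace ℝ X]
    :
    Function.Injective ((topDualPairing ℝ X).flip) := by
  intro x y hxy
  have : ∀ f : StrongDual ℝ X, f (x - y) = 0 := by
    intro f
    have := congrArg (fun g => g f) hxy
    simp only [LinearMap.flip_apply, topDualPairing_apply] at this
    simp [this]
  exact sub_eq_zero.1 (eq_zero_of_forall_dual_eq_zero ℝ this)

lemma tendsto_weak_of_forall_dual {X : Type*} [NormedAddCommGroup X] [NormedSpace ℝ X]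
    {w : ℕ → X} {L : X}
    (h : ∀ f : X →L[ℝ] ℝ, Tendsto (fun n => f (w n)) atTop (𝓝 (f L))) :
    Tendsto (fun n => toWeakSpace ℝ X (w n)) atTop (𝓝 (toWeakSpace ℝ X L)) := by
  refine (WeakBilin.tendsto_iff_forall_eval_tendsto (B := (topDualPairing ℝ X).flip)
    (f := fun n => toWeakSpace ℝ X (w n)) (x := toWeakSpace ℝ X L) pairing_injective).2 ?_
  intro f
  exact h f

-- membership of a weak cluster point in closed convex hulls of tails
lemma clusterPt_mem_closure_convexHull_tail {X : Type*} [NormedAddCommGroup X] [NormedSpace ℝ X]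
    {x : ℕ → X} {ℓ : WeakSpace ℝ X}
    (hℓ : MapClusterPt ℓ atTop (fun n => toWeakSpace ℝ X (x n))) (m : ℕ) :
    (toWeakSpace ℝ X).symm ℓ ∈ closure (convexHull ℝ (x '' Set.Ici m)) := by
  set C : Set X := closure (convexHull ℝ (x '' Set.Ici m)) with hC
  have hCc : Convex ℝ C := (convex_convexHull ℝ _).closure
  have hCcl : IsClosed (toWeakSpace ℝ X '' C) := isClosed_weak_of_convex_closed hCc isClosed_closure
  have hmem : ℓ ∈ toWeakSpace ℝ X '' C := by
    have h1 : map (fun n => toWeakSpace ℝ X (x n)) atTop ≤ 𝓟 (toWeakSpace ℝ X '' C) := by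
      rw [le_principal_iff, mem_map]
      filter_upwards [Ici_mem_atTop m] with n hn
      exact ⟨x n, subset_closure (subset_convexHull ℝ _ ⟨n, hn, rfl⟩), rfl⟩
    have h2 : ClusterPt ℓ (𝓟 (toWeakSpace ℝ X '' C)) := hℓ.clusterPt.mono h1
    have := mem_closure_iff_clusterPt.2 h2
    rwa [hCcl.closure_eq] at this
  obtain ⟨y, hy, hyℓ⟩ := hmem
  rw [← hyℓ]
  simpa using hy



lemma approx_in_window {X : Type*} [NormedAddCommGroup X] [NormedSpace ℝ X]
    {x : ℕ → X} {L : X} (m n : ℕ)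
    (h : L ∈ closure (convexHull ℝ (x '' Set.Ici m))) :
    ∃ N, m < N ∧ ∃ w ∈ convexHull ℝ (x '' Set.Ico m N), ‖w - L‖ < 1/(n+1) := by
  classical
  have hpos : (0:ℝ) < 1/(n+1) := by positivity
  obtain ⟨w, hw, hdist⟩ := Metric.mem_closure_iff.1 h _ hpos
  rw [convexHull_eq_union_convexHull_finite_subsets] at hw
  simp only [mem_iUnion, exists_prop] at hw
  obtain ⟨t, ht, hwt⟩ := hw
  have hex : ∀ a : X, a ∈ t → ∃ i, m ≤ i ∧ x i = a := by
    intro a ha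
    obtain ⟨i, hi, rfl⟩ := ht ha
    exact ⟨i, hi, rfl⟩
  choose idx hidx1 hidx2 using hex
  set N : ℕ := max (m+1) (t.attach.sup (fun a => idx a.1 a.2 + 1)) with hN
  refine ⟨N, lt_of_lt_of_le (Nat.lt_succ_self m) (le_max_left _ _), w, ?_, ?_⟩
  · refine convexHull_mono ?_ hwt
    intro a ha
    refine ⟨idx a ha, ⟨hidx1 a ha, ?_⟩, hidx2 a ha⟩
    calc idx a ha < idx a ha + 1 := Nat.lt_succ_self _
      _ ≤ t.attach.sup (fun b => idx b.1 b.2 + 1) :=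
          Finset.le_sup (f := fun b : {y // y ∈ t} => idx b.1 b.2 + 1) (Finset.mem_attach t ⟨a, ha⟩)
      _ ≤ N := le_max_right _ _
  · rw [← dist_eq_norm, dist_comm]; exact hdist

lemma exists_block_tendsto {X : Type*} [NormedAddCommGroup X] [NormedSpace ℝ X]
    {x : ℕ → X} {L : X}
    (h : ∀ m, L ∈ closure (convexHull ℝ (x '' Set.Ici m))) :
    ∃ z : ℕ → X, IsConvexBlock x z ∧ Tendsto z atTop (𝓝 L) := by
  classical
  have hQ : ∀ m n : ℕ, ∃ N, m < N ∧
      ∃ w ∈ convexHull ℝ (x '' Set.Ico m N), ‖w - L‖ < 1/(n+1) :=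
    fun m n => approx_in_window m n (h m)
  set k : ℕ → ℕ := fun n => Nat.rec 0 (fun n m => (hQ m n).choose) n with hk
  have hk0 : k 0 = 0 := rfl
  have hksucc : ∀ n, k (n+1) = (hQ (k n) n).choose := fun n => rfl
  have hklt : ∀ n, k n < k (n+1) := fun n => (hQ (k n) n).choose_spec.1
  set z : ℕ → X := fun n => (hQ (k n) n).choose_spec.2.choose with hz
  have hzmem : ∀ n, z n ∈ convexHull ℝ (x '' Set.Ico (k n) (k (n+1))) := by
    intro n
    rw [hksucc]
    exact (hQ (k n) n).choose_spec.2.choose_spec.1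
  have hzdist : ∀ n, ‖z n - L‖ < 1/(n+1) :=
    fun n => (hQ (k n) n).choose_spec.2.choose_spec.2
  refine ⟨z, ⟨k, hk0, strictMono_nat_of_lt_succ hklt, hzmem⟩, ?_⟩
  rw [tendsto_iff_norm_sub_tendsto_zero]
  refine squeeze_zero (fun n => norm_nonneg _) (fun n => (hzdist n).le) ?_
  exact tendsto_one_div_add_atTop_nhds_zero_nat



/-- the natural map from the weak space to the weak-star bidual. -/
noncomputable def Tmap (X : Type*) [NormedAddCommGroup X] [NormedSpace ℝ X] :
    WeakSpace ℝ X → WeakDual ℝ (StrongDual ℝ X) :=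
  fun y => StrongDual.toWeakDual (inclusionInDoubleDual ℝ X ((toWeakSpace ℝ X).symm y))

lemma pairing_injective' {X : Type*} [NormedAddCommGroup X] [NormedSpace ℝ X]
    :
    Function.Injective ((topDualPairing ℝ X).flip) := by
  intro x y hxy
  have : ∀ f : StrongDual ℝ X, f (x - y) = 0 := by
    intro f
    have := congrArg (fun g => g f) hxy
    simp only [LinearMap.flip_apply, topDualPairing_apply] at this
    simp [this]
  exact sub_eq_zero.1 (eq_zero_of_forall_dual_eq_zero ℝ this)

lemma Tmap_continuous {X : Type*} [NormedAddCommGroup X] [NormedSpace ℝ X]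
    : Continuous (Tmap X) := by
  apply WeakBilin.continuous_of_continuous_eval
  intro f
  exact WeakBilin.eval_continuous ((topDualPairing ℝ X).flip) f

lemma Tmap_inducing {X : Type*} [NormedAddCommGroup X] [NormedSpace ℝ X]
    : Topology.IsInducing (Tmap X) := by
  have e2 : Topology.IsEmbedding (fun (z : WeakDual ℝ (StrongDual ℝ X)) (f : StrongDual ℝ X) =>
      topDualPairing ℝ (StrongDual ℝ X) z f) :=
    WeakBilin.isEmbedding (B := topDualPairing ℝ (StrongDual ℝ X))
      (ContinuousLinearMap.coe_injective)
  have e1 : Topology.IsEmbedding (fun (x : WeakSpace ℝ X) (f : StrongDual ℝ X) =>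
      (topDualPairing ℝ X).flip x f) :=
    WeakBilin.isEmbedding pairing_injective'
  refine Topology.IsInducing.of_comp Tmap_continuous e2.continuous ?_
  exact e1.isInducing

lemma Tmap_injective {X : Type*} [NormedAddCommGroup X] [NormedSpace ℝ X]
    : Function.Injective (Tmap X) := by
  intro a b hab
  have h := congrArg StrongDual.toWeakDual.symm hab
  simp only [Tmap, LinearEquiv.symm_apply_apply] at h
  have := (inclusionInDoubleDualLi ℝ (E := X)).injective h
  exact (toWeakSpace ℝ X).symm.injective this

lemma whitley {X : Type*} [NormedAddCommGroup X] [NormedSpace ℝ X]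
    {A : Set X}
    (hblock : ∀ x : ℕ → X, (∀ n, x n ∈ A) →
      ∃ z : ℕ → X, IsConvexBlock x z ∧ ∃ L : X,
        ∀ f : X →L[ℝ] ℝ, Tendsto (fun n => f (z n)) atTop (𝓝 (f L)))
    (z0 : StrongDual ℝ (StrongDual ℝ X))
    (hz0 : ∀ G : Finset (StrongDual ℝ X), ∀ ε > 0, ∃ a ∈ A, ∀ f ∈ G, |z0 f - f a| < ε) :
    ∃ L : X, z0 = inclusionInDoubleDual ℝ X L := by
  classical
  set j : X →L[ℝ] StrongDual ℝ (StrongDual ℝ X) := inclusionInDoubleDual ℝ X with hj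
  -- norming finsets for lists
  have hng := fun l : List X =>
    norming_finset (Y := StrongDual ℝ X) (insert z0 ((l.map j).toFinset))
  choose 𝒢 h𝒢1 h𝒢2 using hng
  -- the next point, given current list and accumulated functionals
  have hpk : ∀ p : List X × Finset (StrongDual ℝ X),
      ∃ a ∈ A, ∀ f ∈ p.2 ∪ 𝒢 p.1, |z0 f - f a| < 1/(p.1.length + 1) := by
    intro p
    exact hz0 _ _ (by positivity)
  choose pick hpick1 hpick2 using hpk
  set step : List X × Finset (StrongDual ℝ X) → List X × Finset (StrongDual ℝ X) :=
    fun p => (p.1 ++ [pick p], p.2 ∪ 𝒢 p.1) with hstep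
  set s : ℕ → List X × Finset (StrongDual ℝ X) :=
    fun n => Nat.rec (([], ∅) : List X × Finset (StrongDual ℝ X)) (fun _ p => step p) n with hs
  set x : ℕ → X := fun n => pick (s n) with hx
  have hssucc : ∀ n, s (n+1) = step (s n) := fun n => rfl
  have hlist : ∀ n, (s n).1 = (List.range n).map x := by
    intro n
    induction n with
    | zero => rfl
    | succ n ih =>
      rw [hssucc, hstep, List.range_succ, List.map_append]
      simp only [List.map_cons, List.map_nil]
      rw [ih]
  have hlen : ∀ n, (s n).1.length = n := by
    intro n; rw [hlist]; simp
  have hGstep : ∀ n, (s n).2 ⊆ (s (n+1)).2 := by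
    intro n
    rw [hssucc, hstep]
    exact Finset.subset_union_left
  have hGmono : ∀ i n, i ≤ n → (s i).2 ⊆ (s n).2 := by
    intro i n hin
    induction hin with
    | refl => exact Finset.Subset.refl _
    | step h ih => exact ih.trans (hGstep _)
  have hGsub : ∀ n, 𝒢 ((s n).1) ⊆ (s (n+1)).2 := by
    intro n
    rw [hssucc, hstep]
    exact Finset.subset_union_right
  have hxA : ∀ n, x n ∈ A := fun n => hpick1 (s n)
  have hxsmall : ∀ n, ∀ f ∈ (s (n+1)).2, |z0 f - f (x n)| < 1/(n+1) := by
    intro n f hf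
    have := hpick2 (s n) f (by rw [hssucc, hstep] at hf; exact hf)
    rwa [hlen n] at this
  have hGnorm : ∀ n, ∀ f ∈ (s n).2, ‖f‖ ≤ 1 := by
    intro n
    induction n with
    | zero => simp [hs]
    | succ n ih =>
      intro f hf
      rw [hssucc, hstep] at hf
      rcases Finset.mem_union.1 hf with h | h
      · exact ih f h
      · exact h𝒢1 _ f h
  obtain ⟨w, ⟨k, hk0, hkmono, hwin⟩, L, hL⟩ := hblock x hxA
  -- Claim 1: accumulated functionals vanish on z0 - j L
  have hC1 : ∀ i, ∀ f ∈ (s i).2, z0 f = f L := by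
    intro i f hf
    have hbound : ∀ m, i ≤ m → |z0 f - f (w m)| ≤ 1/(m+1) := by
      intro m him
      have hDset : {y : X | |z0 f - f y| ≤ 1/(m+1)}
          = (f : X →ₗ[ℝ] ℝ) ⁻¹' (Icc (z0 f - 1/(m+1)) (z0 f + 1/(m+1))) := by
        ext y
        simp only [mem_setOf_eq, mem_preimage, mem_Icc, ContinuousLinearMap.coe_coe]
        rw [abs_sub_le_iff]
        constructor <;> intro h <;> constructor <;> linarith [h.1, h.2]
      have hD : Convex ℝ {y : X | |z0 f - f y| ≤ 1/(m+1)} := by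
        rw [hDset]
        exact (convex_Icc _ _).linear_preimage (f : X →ₗ[ℝ] ℝ)
      have hgen : x '' Set.Ico (k m) (k (m+1)) ⊆ {y : X | |z0 f - f y| ≤ 1/(m+1)} := by
        rintro - ⟨t, ht, rfl⟩
        have htm : m ≤ t := le_trans (hkmono.le_apply) ht.1
        have hfi : f ∈ (s (t+1)).2 := hGmono i (t+1) (by omega) hf
        have h1 := hxsmall t f hfi
        have h1t : (1:ℝ)/(t+1) ≤ 1/(m+1) := by
          apply one_div_le_one_div_of_le
          · positivity
          · exact_mod_cast by omega
        exact le_trans h1.le h1t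
      exact convexHull_min hgen hD (hwin m)
    have h1 : Tendsto (fun m : ℕ => z0 f - f (w m)) atTop (𝓝 0) := by
      apply squeeze_zero_norm' ?_ (tendsto_one_div_add_atTop_nhds_zero_nat)
      filter_upwards [Ici_mem_atTop i] with m hm
      rw [Real.norm_eq_abs]
      exact hbound m hm
    have h2 : Tendsto (fun m : ℕ => f (w m) - f L) atTop (𝓝 0) := by
      simpa using (hL f).sub (tendsto_const_nhds (x := f L))
    have h3 : Tendsto (fun m : ℕ => (z0 f - f (w m)) + (f (w m) - f L)) atTop (𝓝 0) := by
      simpa using h1.add h2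
    have h4 : (fun m : ℕ => (z0 f - f (w m)) + (f (w m) - f L)) = fun _ => z0 f - f L := by
      funext m; ring
    rw [h4] at h3
    have := tendsto_nhds_unique h3 tendsto_const_nhds
    linarith
  -- Claim 2: j L lies in the closed span
  have hLC : L ∈ closure (convexHull ℝ (Set.range x)) := by
    have hCconv : Convex ℝ (closure (convexHull ℝ (Set.range x))) :=
      (convex_convexHull ℝ _).closure
    have hclosed := isClosed_weak_of_convex_closed hCconv isClosed_closure
    have hwC : ∀ m, toWeakSpace ℝ X (w m) ∈
        toWeakSpace ℝ X '' closure (convexHull ℝ (Set.range x)) := by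
      intro m
      refine ⟨w m, subset_closure (convexHull_mono (image_subset_range x _) (hwin m)), rfl⟩
    have hmem := hclosed.mem_of_tendsto (tendsto_weak_of_forall_dual hL)
      (Eventually.of_forall hwC)
    obtain ⟨y, hy, hyL⟩ := hmem
    rwa [← (toWeakSpace ℝ X).injective hyL]
  haveI : ContinuousAdd (StrongDual ℝ (StrongDual ℝ X)) :=
    (inferInstance : IsTopologicalAddGroup (StrongDual ℝ (StrongDual ℝ X))).toContinuousAdd
  set M := (Submodule.span ℝ ({z0} ∪ Set.range (j ∘ x))).topologicalClosure with hM
  have hjLM : j L ∈ M := by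
    have h1 : j L ∈ closure (j '' closure (convexHull ℝ (Set.range x))) :=
      subset_closure ⟨L, hLC, rfl⟩
    have h2 : j '' closure (convexHull ℝ (Set.range x)) ⊆
        closure (j '' convexHull ℝ (Set.range x)) :=
      image_closure_subset_closure_image j.continuous
    have h3 : j '' convexHull ℝ (Set.range x) ⊆
        (Submodule.span ℝ ({z0} ∪ Set.range (j ∘ x)) : Set (StrongDual ℝ (StrongDual ℝ X))) := by
      rw [show (⇑j '' convexHull ℝ (Set.range x)) = convexHull ℝ (⇑j '' Set.range x) by
        simpa using (j.toLinearMap).image_convexHull (Set.range x)]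
      refine convexHull_min ?_ (Submodule.span ℝ _).convex
      rintro - ⟨-, ⟨t, rfl⟩, rfl⟩
      exact Submodule.subset_span (Or.inr ⟨t, rfl⟩)
    have h4 : closure (j '' closure (convexHull ℝ (Set.range x))) ⊆ (M : Set _) := by
      rw [hM, Submodule.topologicalClosure_coe]
      exact closure_mono (h2.trans (closure_mono h3)) |>.trans (by rw [closure_closure])
    exact h4 h1
  have hz0M : z0 ∈ M := Submodule.le_topologicalClosure _
    (Submodule.subset_span (Or.inl rfl))
  set v : StrongDual ℝ (StrongDual ℝ X) := z0 - j L with hv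
  have hvM : v ∈ M := by have := M.sub_mem (x := z0) (y := j L) hz0M hjLM; exact this
  -- Claim 3: v = 0
  have hveps : ∀ ε : ℝ, 0 < ε → ‖v‖ ≤ 3 * ε := by
    intro ε hε
    have hvcl : v ∈ closure ((Submodule.span ℝ ({z0} ∪ Set.range (j ∘ x)) :
        Submodule ℝ (StrongDual ℝ (StrongDual ℝ X))) : Set _) := by
      rw [← Submodule.topologicalClosure_coe]
      exact hvM
    obtain ⟨u, hu, hdu⟩ := (Metric.mem_closure_iff (α := StrongDual ℝ (StrongDual ℝ X))).1 hvcl ε hε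
    obtain ⟨T, hTsub, hTspan⟩ := Submodule.mem_span_finite_of_mem_span hu
    have hexT : ∀ a : {a // a ∈ T}, ∃ i : ℕ, a.1 = z0 ∨ j (x i) = a.1 := by
      rintro ⟨a, ha⟩
      rcases hTsub ha with h | ⟨i, rfl⟩
      · exact ⟨0, Or.inl h⟩
      · exact ⟨i, Or.inr rfl⟩
    choose ι hι using hexT
    set n : ℕ := T.attach.sup (fun a => ι a + 1) with hn
    have hTsub2 : (T : Set (StrongDual ℝ (StrongDual ℝ X))) ⊆
        ((insert z0 ((((List.range n).map x).map j).toFinset) : Finset _) : Set _) := by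
      intro a ha
      rcases hι ⟨a, ha⟩ with h | h
      · have h' : a = z0 := h
        rw [h']; exact Finset.mem_insert_self _ _
      · refine Finset.mem_insert_of_mem ?_
        rw [List.mem_toFinset, List.mem_map]
        refine ⟨x (ι ⟨a, ha⟩), ?_, h⟩
        rw [List.mem_map]
        refine ⟨ι ⟨a, ha⟩, List.mem_range.2 ?_, rfl⟩
        calc ι ⟨a, ha⟩ < ι ⟨a, ha⟩ + 1 := Nat.lt_succ_self _
          _ ≤ n := Finset.le_sup (f := fun b : {b // b ∈ T} => ι b + 1) (Finset.mem_attach _ _)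
    have huspan : u ∈ Submodule.span ℝ
        ((insert z0 ((((List.range n).map x).map j).toFinset) : Finset _) : Set _) :=
      Submodule.span_mono hTsub2 hTspan
    have hnorming := h𝒢2 ((s n).1)
    rw [hlist n] at hnorming
    obtain ⟨f, hfG, hfu⟩ := hnorming u huspan
    have hfG' : f ∈ (s (n+1)).2 := hGsub n (by rw [hlist n]; exact hfG)
    have hfn : ‖f‖ ≤ 1 := hGnorm (n+1) f hfG'
    have hvf : v f = 0 := by
      rw [hv]
      have := hC1 (n+1) f hfG'
      simp only [ContinuousLinearMap.sub_apply]
      rw [this]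
      simp [hj, dual_def]
    have hduv : ‖v - u‖ < ε := by have := (dist_eq_norm v u).symm.trans_lt hdu; exact this
    have huf : |u f| ≤ ε := by
      have : u f = v f + (u - v) f := by simp
      rw [this, hvf, zero_add]
      have h5 := (u - v).le_opNorm f
      rw [Real.norm_eq_abs] at h5
      calc |(u - v) f| ≤ ‖u - v‖ * ‖f‖ := h5
        _ ≤ ε * 1 := by
            apply mul_le_mul _ hfn (norm_nonneg _) hε.le
            exact (norm_sub_rev u v).trans_le hduv.le
        _ = ε := mul_one _
    calc ‖v‖ ≤ ‖u‖ + ‖v - u‖ := norm_le_insert' v u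
      _ ≤ 2 * |u f| + ε := add_le_add hfu hduv.le
      _ ≤ 2 * ε + ε := by linarith
      _ = 3 * ε := by ring
  have hvn : ‖v‖ ≤ 0 := by
    by_contra h
    push_neg at h
    have := hveps (‖v‖/4) (by linarith)
    linarith
  have hv0 : v = 0 := (norm_le_zero_iff (E := StrongDual ℝ (StrongDual ℝ X))).mp hvn
  exact ⟨L, sub_eq_zero.1 hv0⟩


theorem stmt9 {X : Type*} [NormedAddCommGroup X] [NormedSpace ℝ X] [CompleteSpace X]
    (A : Set X) (hA : Bornology.IsBounded A) :
    (IsCompact (closure (toWeakSpace ℝ X '' A)) ↔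
      ∀ x : ℕ → X, (∀ n, x n ∈ A) →
        ∃ z : ℕ → X, IsConvexBlock x z ∧ ∃ L : X, Tendsto z atTop (𝓝 L)) ∧
    (IsCompact (closure (toWeakSpace ℝ X '' A)) ↔
      ∀ x : ℕ → X, (∀ n, x n ∈ A) →
        ∃ z : ℕ → X, IsConvexBlock x z ∧ ∃ L : X,
          ∀ f : X →L[ℝ] ℝ, Tendsto (fun n => f (z n)) atTop (𝓝 (f L))) := by
  classical
  -- (1) compact → norm-convergent convex blocks
  have h12 : IsCompact (closure (toWeakSpace ℝ X '' A)) →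
      ∀ x : ℕ → X, (∀ n, x n ∈ A) →
        ∃ z : ℕ → X, IsConvexBlock x z ∧ ∃ L : X, Tendsto z atTop (𝓝 L) := by
    intro hcpt x hx
    have hle : map (fun n => toWeakSpace ℝ X (x n)) atTop ≤
        𝓟 (closure (toWeakSpace ℝ X '' A)) := by
      rw [le_principal_iff, mem_map]
      filter_upwards with n
      exact subset_closure ⟨x n, hx n, rfl⟩
    obtain ⟨ℓ, -, hℓ⟩ := hcpt.exists_clusterPt hle
    have htail := fun m => clusterPt_mem_closure_convexHull_tail hℓ m
    obtain ⟨z, hb, hz⟩ := exists_block_tendsto htail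
    exact ⟨z, hb, _, hz⟩
  -- (2) norm-blocks → weak-blocks
  have h23 : (∀ x : ℕ → X, (∀ n, x n ∈ A) →
        ∃ z : ℕ → X, IsConvexBlock x z ∧ ∃ L : X, Tendsto z atTop (𝓝 L)) →
      ∀ x : ℕ → X, (∀ n, x n ∈ A) →
        ∃ z : ℕ → X, IsConvexBlock x z ∧ ∃ L : X,
          ∀ f : X →L[ℝ] ℝ, Tendsto (fun n => f (z n)) atTop (𝓝 (f L)) := by
    intro h x hx
    obtain ⟨z, hb, L, hz⟩ := h x hx
    exact ⟨z, hb, L, fun f => ((f.continuous.tendsto L).comp hz)⟩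
  -- (3) weak-blocks → compact
  have h31 : (∀ x : ℕ → X, (∀ n, x n ∈ A) →
        ∃ z : ℕ → X, IsConvexBlock x z ∧ ∃ L : X,
          ∀ f : X →L[ℝ] ℝ, Tendsto (fun n => f (z n)) atTop (𝓝 (f L))) →
      IsCompact (closure (toWeakSpace ℝ X '' A)) := by
    intro hblock
    obtain ⟨R, hR⟩ := (Metric.isBounded_iff_subset_closedBall (0:X)).1 hA
    set K : Set (WeakDual ℝ (StrongDual ℝ X)) :=
      closure (Tmap X '' (toWeakSpace ℝ X '' A)) with hK
    set S : Set (WeakDual ℝ (StrongDual ℝ X)) :=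
      WeakDual.toStrongDual ⁻¹' closedBall (0 : StrongDual ℝ (StrongDual ℝ X)) (max R 0) with hS
    have hScpt : IsCompact S := by
      rw [hS]; exact WeakDual.isCompact_closedBall 0 (max R 0)
    have hScl : IsClosed S := hScpt.isClosed
    have hsub : Tmap X '' (toWeakSpace ℝ X '' A) ⊆ S := by
      rintro - ⟨-, ⟨a, ha, rfl⟩, rfl⟩
      have h1 : ‖a‖ ≤ R := by
        have := hR ha
        rwa [mem_closedBall, dist_zero_right] at this
      have h2 : ‖inclusionInDoubleDual ℝ X a‖ ≤ max R 0 :=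
        le_trans (double_dual_bound ℝ X a) (le_trans h1 (le_max_left _ _))
      simp only [hS, mem_preimage, mem_closedBall, dist_zero_right]
      exact (dist_zero_right (WeakDual.toStrongDual (Tmap X (toWeakSpace ℝ X a)))).trans_le h2
    have hKcpt : IsCompact K := hScpt.of_isClosed_subset isClosed_closure
      (closure_minimal hsub hScl)
    have hKrange : K ⊆ Set.range (Tmap X) := by
      intro ζ hζ
      set z0 : StrongDual ℝ (StrongDual ℝ X) := StrongDual.toWeakDual.symm ζ with hz0def
      have hz0 : ∀ G : Finset (StrongDual ℝ X), ∀ ε > 0, ∃ a ∈ A, ∀ f ∈ G, |z0 f - f a| < ε := by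
        intro G ε hε
        set U : Set (WeakDual ℝ (StrongDual ℝ X)) :=
          ⋂ f ∈ G, (fun w : WeakDual ℝ (StrongDual ℝ X) => w f) ⁻¹' (ball (z0 f) ε) with hU
        have hUopen : IsOpen U := by
          refine isOpen_biInter_finset (fun f _ => ?_)
          exact (WeakBilin.eval_continuous (topDualPairing ℝ (StrongDual ℝ X)) f).isOpen_preimage
            _ isOpen_ball
        have hζU : ζ ∈ U := by
          simp only [hU, mem_iInter, mem_preimage, mem_ball, dist_self]
          intro f _
          have : (ζ : WeakDual ℝ (StrongDual ℝ X)) f = z0 f := rfl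
          rw [this]
          simpa using hε
        obtain ⟨y, hyU, hyim⟩ := _root_.mem_closure_iff.1 hζ U hUopen hζU
        obtain ⟨-, ⟨a, ha, rfl⟩, rfl⟩ := hyim
        refine ⟨a, ha, fun f hf => ?_⟩
        have := mem_iInter₂.1 hyU f hf
        simp only [mem_preimage, mem_ball] at this
        have heval : (Tmap X (toWeakSpace ℝ X a)) f = f a := rfl
        rw [heval] at this
        rw [abs_sub_comm]
        rwa [Real.dist_eq] at this
      obtain ⟨L, hL⟩ := whitley hblock z0 hz0
      refine ⟨toWeakSpace ℝ X L, ?_⟩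
      have : Tmap X (toWeakSpace ℝ X L) = StrongDual.toWeakDual (inclusionInDoubleDual ℝ X L) := by
        simp [Tmap]
      rw [this, ← hL, hz0def]
      simp
    have hemb : Topology.IsEmbedding (Tmap X) := ⟨Tmap_inducing (X := X), Tmap_injective (X := X)⟩
    have hcl : closure (toWeakSpace ℝ X '' A) = Tmap X ⁻¹' K := by
      rw [hK, (Tmap_inducing (X := X)).closure_eq_preimage_closure_image]
    rw [hcl, hemb.isCompact_iff, Set.image_preimage_eq_of_subset hKrange]
    exact hKcpt
  exact ⟨⟨h12, fun h => h31 (h23 h)⟩, ⟨fun h => h23 (h12 h), h31⟩⟩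
end
end

section
/- A Banach space X has the Grothendieck property if and only if every weak* null sequence in X* admits a convex block subsequence that is norm null. -/
open Filter Topology Metric Set NormedSpace

noncomputable section

variable (X : Type*) [NormedAddCommGroup X] [NormedSpace ℝ X]

variable {X}

variable (X)

theorem stmt10 {X : Type*} [NormedAddCommGroup X] [NormedSpace ℝ X] [CompleteSpace X] :
    Grothendieck X ↔
      ∀ f : ℕ → X →L[ℝ] ℝ, WeakStarNull X f →
        ∃ g, IsConvexBlock f g ∧ Tendsto (fun n => ‖g n‖) atTop (𝓝 0) := by
  constructor
  · intro hG f hf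
    -- Main claim: for every m, n there is a far-enough window whose convex hull
    -- contains an element of norm < 1/(n+1).
    have claim : ∀ m n : ℕ, ∃ N, m < N ∧
        ∃ g ∈ convexHull ℝ (f '' Set.Ico m N), ‖g‖ < 1 / (n + 1 : ℝ) := by
      intro m n
      by_contra h
      push_neg at h
      set C := convexHull ℝ (f '' Set.Ici m) with hC
      have hU : C ⊆ ⋃ N : ℕ, convexHull ℝ (f '' Set.Ico m (m + 1 + N)) := by
        apply convexHull_min
        · rintro y ⟨i, hi, rfl⟩
          exact Set.mem_iUnion.2 ⟨i + 1 - m,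
            subset_convexHull _ _ ⟨i, ⟨hi, by simp [Set.mem_Ici] at hi; omega⟩, rfl⟩⟩
        · intro x hx y hy a b ha hb hab
          obtain ⟨N1, hx1⟩ := Set.mem_iUnion.1 hx
          obtain ⟨N2, hy1⟩ := Set.mem_iUnion.1 hy
          have hx2 : x ∈ convexHull ℝ (f '' Set.Ico m (m + 1 + max N1 N2)) :=
            convexHull_mono (Set.image_mono (Set.Ico_subset_Ico le_rfl (by omega))) hx1
          have hy2 : y ∈ convexHull ℝ (f '' Set.Ico m (m + 1 + max N1 N2)) :=
            convexHull_mono (Set.image_mono (Set.Ico_subset_Ico le_rfl (by omega))) hy1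
          exact Set.mem_iUnion.2 ⟨max N1 N2,
            (convex_convexHull ℝ _) hx2 hy2 ha hb hab⟩
      have hCsub : C ⊆ {y : X →L[ℝ] ℝ | 1 / (n + 1 : ℝ) ≤ ‖y‖} := by
        intro y hy
        obtain ⟨N, hyN⟩ := Set.mem_iUnion.1 (hU hy)
        exact h _ (by omega) y hyN
      have hpos : (0 : ℝ) < 1 / (n + 1 : ℝ) := by positivity
      have h0 : (0 : X →L[ℝ] ℝ) ∉ closure C := by
        intro h0
        have hcl : closure C ⊆ {y : X →L[ℝ] ℝ | 1 / (n + 1 : ℝ) ≤ ‖y‖} :=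
          closure_minimal hCsub (isClosed_le continuous_const continuous_norm)
        have := hcl h0
        simp only [Set.mem_setOf_eq, norm_zero] at this
        linarith
      obtain ⟨Φ, u, hu0, huC⟩ :=
        geometric_hahn_banach_point_closed ((convex_convexHull ℝ _).closure)
          isClosed_closure h0
      have hu : (0 : ℝ) < u := by simpa using hu0
      have hev : ∀ᶠ k in atTop, Φ (f k) < u :=
        (hG f hf Φ).eventually_lt_const hu
      obtain ⟨k, hk1, hk2⟩ := (hev.and (eventually_ge_atTop m)).exists
      have hmem : f k ∈ closure C :=
        subset_closure (subset_convexHull ℝ _ ⟨k, hk2, rfl⟩)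
      exact absurd (huC _ hmem) (not_lt.2 hk1.le)
    choose N hN g' hg' hg'norm using claim
    let k : ℕ → ℕ := fun n => Nat.rec 0 (fun n kn => N kn n) n
    refine ⟨fun n => g' (k n) n, ⟨k, rfl, ?_, ?_⟩, ?_⟩
    · exact strictMono_nat_of_lt_succ fun n => hN (k n) n
    · intro n; exact hg' (k n) n
    · refine squeeze_zero (fun n => norm_nonneg _)
        (fun n => (hg'norm (k n) n).le) ?_
      exact tendsto_one_div_add_atTop_nhds_zero_nat
  · intro H f hf Φ
    by_contra hT
    have hfreq : ∃ ε > (0 : ℝ), ∃ᶠ n in atTop, ε ≤ |Φ (f n)| := by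
      rw [Metric.tendsto_atTop] at hT
      push_neg at hT
      obtain ⟨ε, hε, hT⟩ := hT
      refine ⟨ε, hε, Filter.frequently_atTop.2 fun a => ?_⟩
      obtain ⟨n, hn, hd⟩ := hT a
      exact ⟨n, hn, by simpa [Real.dist_eq] using hd⟩
    obtain ⟨ε, hε, hfreq⟩ := hfreq
    have hcase : (∃ᶠ n in atTop, ε ≤ Φ (f n)) ∨ (∃ᶠ n in atTop, ε ≤ (-Φ) (f n)) := by
      rw [← Filter.frequently_or_distrib]
      refine hfreq.mono fun n h => ?_
      rcases le_abs.1 h with h1 | h1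
      · exact Or.inl h1
      · exact Or.inr (by simpa using h1)
    have hmain : ∃ Ψ : (X →L[ℝ] ℝ) →L[ℝ] ℝ, ∃ᶠ n in atTop, ε ≤ Ψ (f n) := by
      rcases hcase with h1 | h1
      · exact ⟨Φ, h1⟩
      · exact ⟨-Φ, h1⟩
    obtain ⟨Ψ, hΨ⟩ := hmain
    obtain ⟨φ, hφmono, hφ⟩ := Filter.extraction_of_frequently_atTop hΨ
    have hwf : WeakStarNull X (fun n => f (φ n)) := fun x =>
      (hf x).comp hφmono.tendsto_atTop
    obtain ⟨g, ⟨k, hk0, hkmono, hkmem⟩, hgnorm⟩ := H _ hwf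
    have hge : ∀ n, ε ≤ Ψ (g n) := by
      intro n
      have hconv : convexHull ℝ ((fun n => f (φ n)) '' Set.Ico (k n) (k (n + 1)))
          ⊆ {y : X →L[ℝ] ℝ | ε ≤ Ψ y} := by
        apply convexHull_min
        · rintro y ⟨i, _, rfl⟩
          exact hφ i
        · intro x hx y hy a b ha hb hab
          simp only [Set.mem_setOf_eq, map_add, map_smul, smul_eq_mul] at *
          nlinarith
      exact hconv (hkmem n)
    have hgz : Tendsto g atTop (𝓝 0) := by
      rw [← tendsto_zero_iff_norm_tendsto_zero] at hgnorm
      exact hgnorm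
    have hΨg : Tendsto (fun n => Ψ (g n)) atTop (𝓝 0) := by
      have := (Ψ.continuous.tendsto 0).comp hgz
      simpa [Function.comp_def] using this
    obtain ⟨n, hn⟩ := (hΨg.eventually_lt_const hε).exists
    exact absurd (hge n) (not_le.2 hn)
end
end
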